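/- arXiv:1807.08658 — 9 statements merged into one kernel-verified Lean document; each statement's English description precedes it below -/
import Mathlib

section
/- Let a = (a_1, a_2, ...) be a non-decreasing sequence of real numbers and let e = (e_1, e_2, ...) be a real sequence that is a restricted growth sequence relative to a. Then the infinite lower-triangular matrix S^{a,e} = [S^{a,e}(m,k)]_{m,k ≥ 0} is totally non-negative, i.e., every minor (the determinant of any square submatrix obtained by selecting finitely many rows and the same number of columns) is non-negative. -/
open Polynomial Finset

/-- The numbers `S^{a,e}(m,k)` (0-indexed: `a i`, `e i` denote `a_{i+1}`, `e_{i+1}`),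
uniquely determined by `∏_{i=1}^m (x - e_i) = ∑_{k=0}^m S^{a,e}(m,k) ∏_{i=1}^k (x - a_i)`
together with `S^{a,e}(m,k) = 0` for `k > m`. -/
def SaeRel (a e : ℕ → ℝ) (S : ℕ → ℕ → ℝ) : Prop :=
  (∀ m k : ℕ, m < k → S m k = 0) ∧
  ∀ m : ℕ, ∏ i ∈ Finset.range m, (X - C (e i)) =
    ∑ k ∈ Finset.range (m + 1), C (S m k) * ∏ i ∈ Finset.range k, (X - C (a i))

/-- The cap-index function for restricted growth: `rgsF a e i` is the (0-indexed)
index of the cap for `e i`; the cap for `e 0` is `a 0`, and the cap index increments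
exactly when equality with the cap holds. -/
noncomputable def rgsF (a e : ℕ → ℝ) : ℕ → ℕ
  | 0 => 0
  | i + 1 => if e i = a (rgsF a e i) then rgsF a e i + 1 else rgsF a e i

/-- `e` is a restricted growth sequence relative to `a`. -/
def IsRGS (a e : ℕ → ℝ) : Prop := ∀ i : ℕ, e i ≤ a (rgsF a e i)

/-- An infinite matrix (rows and columns indexed by `ℕ`) is totally non-negative if
every minor is non-negative. -/
def TotallyNonneg (M : ℕ → ℕ → ℝ) : Prop :=
  ∀ (p : ℕ) (r c : Fin p → ℕ), StrictMono r → StrictMono c →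
    0 ≤ (Matrix.of fun i j => M (r i) (c j)).det


noncomputable def Smat (a e : ℕ → ℝ) : ℕ → ℕ → ℝ
  | 0, 0 => 1
  | 0, _ + 1 => 0
  | m + 1, 0 => (a 0 - e m) * Smat a e m 0
  | m + 1, k + 1 => Smat a e m k + (a (k + 1) - e m) * Smat a e m (k + 1)

lemma Smat_tri (a e : ℕ → ℝ) : ∀ m k, m < k → Smat a e m k = 0 := by
  intro m
  induction m with
  | zero => intro k hk; match k, hk with | k+1, _ => rfl
  | succ m ih =>
    intro k hk
    match k, hk with
    | k+1, hk =>
      have h1 : Smat a e m k = 0 ∨ m + 1 ≤ k := by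
        rcases Nat.lt_or_ge m k with h | h
        · exact Or.inl (ih k h)
        · omega
      show Smat a e m k + (a (k+1) - e m) * Smat a e m (k+1) = 0
      rw [ih (k+1) (by omega), ih k (by omega), mul_zero, add_zero]

/-- shift-down of coefficients -/
def predf (t : ℕ → ℝ) : ℕ → ℝ
  | 0 => 0
  | k + 1 => t k

lemma mul_lin (a : ℕ → ℝ) (b : ℝ) (t : ℕ → ℝ) (n : ℕ) (ht : ∀ j, n ≤ j → t j = 0) :
    (X - C b) * (∑ k ∈ range n, C (t k) * ∏ i ∈ range k, (X - C (a i))) =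
      ∑ k ∈ range (n + 1), C (predf t k + (a k - b) * t k) * ∏ i ∈ range k, (X - C (a i)) := by
  have key : ∀ k : ℕ, (X - C b) * (C (t k) * ∏ i ∈ range k, (X - C (a i))) =
      C (t k) * ∏ i ∈ range (k+1), (X - C (a i)) +
        C ((a k - b) * t k) * ∏ i ∈ range k, (X - C (a i)) := by
    intro k
    have : (X - C b) = (X - C (a k)) + C (a k - b) := by
      rw [map_sub]; ring
    rw [this, add_mul, prod_range_succ, map_mul, map_sub]
    ring
  rw [Finset.mul_sum]
  rw [Finset.sum_congr rfl (fun k _ => key k), Finset.sum_add_distrib]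
  have h1 : ∑ k ∈ range n, C (t k) * ∏ i ∈ range (k+1), (X - C (a i)) =
      ∑ k ∈ range (n+1), C (predf t k) * ∏ i ∈ range k, (X - C (a i)) := by
    rw [Finset.sum_range_succ' (fun k => C (predf t k) * ∏ i ∈ range k, (X - C (a i))) n]
    simp [predf]
  have h2 : ∑ k ∈ range n, C ((a k - b) * t k) * ∏ i ∈ range k, (X - C (a i)) =
      ∑ k ∈ range (n+1), C ((a k - b) * t k) * ∏ i ∈ range k, (X - C (a i)) := by
    rw [Finset.sum_range_succ, ht n le_rfl]
    simp
  rw [h1, h2, ← Finset.sum_add_distrib]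
  apply Finset.sum_congr rfl
  intro k _
  rw [map_add]
  ring

lemma Smat_rel (a e : ℕ → ℝ) : SaeRel a e (Smat a e) := by
  constructor
  · exact fun m k h => Smat_tri a e m k h
  · intro m
    induction m with
    | zero => simp [Smat]
    | succ m ih =>
      rw [prod_range_succ, ih, mul_comm,
        mul_lin a (e m) (Smat a e m) (m+1) (fun j hj => Smat_tri a e m j (by omega))]
      apply Finset.sum_congr rfl
      intro k _
      congr 1
      cases k with
      | zero => simp [predf, Smat]
      | succ k => simp [predf, Smat]

lemma lin_indep (a : ℕ → ℝ) : ∀ (n : ℕ) (d : ℕ → ℝ),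
    (∑ k ∈ range n, C (d k) * ∏ i ∈ range k, (X - C (a i))) = 0 → ∀ k < n, d k = 0 := by
  intro n
  induction n with
  | zero => intro d _ k hk; omega
  | succ n ih =>
    intro d hd
    have hmon : ∀ k : ℕ, (∏ i ∈ range k, (X - C (a i))).Monic :=
      fun k => monic_prod_of_monic _ _ (fun i _ => monic_X_sub_C _)
    have hdeg : ∀ k : ℕ, (∏ i ∈ range k, (X - C (a i))).natDegree = k := by
      intro k
      rw [natDegree_prod_of_monic _ _ (fun i _ => monic_X_sub_C _)]
      simp
    have hn : d n = 0 := by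
      have := congrArg (fun p => Polynomial.coeff p n) hd
      simp only [Polynomial.finset_sum_coeff, Polynomial.coeff_zero] at this
      rw [Finset.sum_range_succ] at this
      have hz : ∀ k ∈ range n, Polynomial.coeff (C (d k) * ∏ i ∈ range k, (X - C (a i))) n = 0 := by
        intro k hk
        simp only [Finset.mem_range] at hk
        rw [Polynomial.coeff_C_mul, Polynomial.coeff_eq_zero_of_natDegree_lt (by rw [hdeg]; omega), mul_zero]
      rw [Finset.sum_eq_zero hz, zero_add, Polynomial.coeff_C_mul] at this
      have hc := (hmon n).coeff_natDegree
      rw [hdeg n] at hc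
      rw [hc, mul_one] at this
      exact this
    have hrest : (∑ k ∈ range n, C (d k) * ∏ i ∈ range k, (X - C (a i))) = 0 := by
      rw [Finset.sum_range_succ, hn] at hd
      simpa using hd
    intro k hk
    rcases Nat.lt_or_ge k n with h | h
    · exact ih d hrest k h
    · have : k = n := by omega
      rw [this]; exact hn

lemma Sae_unique (a e : ℕ → ℝ) (S : ℕ → ℕ → ℝ) (hS : SaeRel a e S) :
    ∀ m k, S m k = Smat a e m k := by
  intro m k
  rcases Nat.lt_or_ge m k with h | h
  · rw [hS.1 m k h, Smat_tri a e m k h]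
  · have hd : ∑ j ∈ range (m+1), C (S m j - Smat a e m j) * ∏ i ∈ range j, (X - C (a i)) = 0 := by
      have h1 := hS.2 m
      have h2 := (Smat_rel a e).2 m
      have : ∑ j ∈ range (m+1), C (S m j) * ∏ i ∈ range j, (X - C (a i))
          - ∑ j ∈ range (m+1), C (Smat a e m j) * ∏ i ∈ range j, (X - C (a i)) = 0 := by
        rw [← h1, ← h2]; ring
      rw [← Finset.sum_sub_distrib] at this
      rw [← this]
      apply Finset.sum_congr rfl
      intro j _
      rw [map_sub]; ring
    have h3 : S m k - Smat a e m k = 0 :=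
      lin_indep a (m+1) (fun j => S m j - Smat a e m j) hd k (by omega)
    linarith
lemma rgsF_shift_ne (a e : ℕ → ℝ) (h : e 0 ≠ a 0) : ∀ i : ℕ,
    rgsF a (fun j => e (j+1)) i = rgsF a e (i+1) := by
  intro i
  induction i with
  | zero => simp [rgsF, h]
  | succ i ih =>
    show (if e (i+1) = a (rgsF a (fun j => e (j+1)) i) then _ else _) = _
    rw [ih]
    rfl

lemma rgsF_shift_eq (a e : ℕ → ℝ) (h : e 0 = a 0) : ∀ i : ℕ,
    rgsF (fun j => a (j+1)) (fun j => e (j+1)) i + 1 = rgsF a e (i+1) := by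
  intro i
  induction i with
  | zero => simp [rgsF, h]
  | succ i ih =>
    show (if e (i+1) = a (rgsF (fun j => a (j+1)) (fun j => e (j+1)) i + 1) then _ else _) + 1 = _
    rw [ih]
    show _ = (if e (i+1) = a (rgsF a e (i+1)) then rgsF a e (i+1) + 1 else rgsF a e (i+1))
    split_ifs with hcond
    · rw [← ih]
    · rw [← ih]

lemma isRGS_shift_ne (a e : ℕ → ℝ) (he : IsRGS a e) (h : e 0 ≠ a 0) :
    IsRGS a (fun j => e (j+1)) := by
  intro i
  rw [rgsF_shift_ne a e h i]
  exact he (i+1)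

lemma isRGS_shift_eq (a e : ℕ → ℝ) (he : IsRGS a e) (h : e 0 = a 0) :
    IsRGS (fun j => a (j+1)) (fun j => e (j+1)) := by
  intro i
  show e (i+1) ≤ a (rgsF (fun j => a (j+1)) (fun j => e (j+1)) i + 1)
  rw [rgsF_shift_eq a e h i]
  exact he (i+1)

/-- Strict-case (in fact unconditional) one-step peeling identity. -/
lemma Smat_step (a e : ℕ → ℝ) (m k : ℕ) :
    Smat a e (m+1) k = predf (Smat a (fun j => e (j+1)) m) k
      + (a k - e 0) * Smat a (fun j => e (j+1)) m k := by
  set T := Smat a (fun j => e (j+1)) with hT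
  set Y : ℕ → ℕ → ℝ := fun m k => match m with
    | 0 => if k = 0 then 1 else 0
    | m+1 => predf (T m) k + (a k - e 0) * T m k with hY
  have hrel : SaeRel a e Y := by
    constructor
    · intro m k hmk
      match m with
      | 0 => simp only [hY]; rw [if_neg (by omega)]
      | m+1 =>
        show predf (T m) k + (a k - e 0) * T m k = 0
        match k, hmk with
        | k+1, hmk =>
          show T m k + (a (k+1) - e 0) * T m (k+1) = 0
          have h1 : T m k = 0 := Smat_tri a _ m k (by omega)
          have h2 : T m (k+1) = 0 := Smat_tri a _ m (k+1) (by omega)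
          rw [h1, h2, mul_zero, add_zero]
    · intro m
      match m with
      | 0 => simp [hY]
      | m+1 =>
        rw [Finset.prod_range_succ' (fun i => (X - C (e i))) m]
        rw [(Smat_rel a (fun j => e (j+1))).2 m, mul_comm,
          mul_lin a (e 0) (T m) (m+1) (fun j hj => Smat_tri a _ m j (by omega))]
  exact (Sae_unique a e Y hrel (m+1) k).symm

/-- Equality-case one-step peeling identity. -/
lemma Smat_step_eq (a e : ℕ → ℝ) (h : e 0 = a 0) (m k : ℕ) :
    Smat a e (m+1) k = predf (Smat (fun j => a (j+1)) (fun j => e (j+1)) m) k := by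
  set T := Smat (fun j => a (j+1)) (fun j => e (j+1)) with hT
  set Y : ℕ → ℕ → ℝ := fun m k => match m with
    | 0 => if k = 0 then 1 else 0
    | m+1 => predf (T m) k with hY
  have hrel : SaeRel a e Y := by
    constructor
    · intro m k hmk
      match m with
      | 0 => simp only [hY]; rw [if_neg (by omega)]
      | m+1 =>
        match k, hmk with
        | k+1, hmk =>
          show T m k = 0
          exact Smat_tri _ _ m k (by omega)
    · intro m
      match m with
      | 0 => simp [hY]
      | m+1 =>
        rw [Finset.prod_range_succ' (fun i => (X - C (e i))) m]
        rw [(Smat_rel (fun j => a (j+1)) (fun j => e (j+1))).2 m, h]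
        rw [Finset.sum_mul]
        have key : ∀ j ∈ range (m+1),
            C (T m j) * (∏ i ∈ range j, (X - C (a (i+1)))) * (X - C (a 0)) =
            C (T m j) * ∏ i ∈ range (j+1), (X - C (a i)) := by
          intro j _
          rw [Finset.prod_range_succ' (fun i => (X - C (a i))) j, mul_assoc]
        rw [Finset.sum_congr rfl key]
        rw [Finset.sum_range_succ' (fun k => C (predf (fun j_1 => T m j_1) k) * ∏ i ∈ range k, (X - C (a i))) (m+1)]
        simp [predf]
  exact (Sae_unique a e Y hrel (m+1) k).symm
lemma det_expand_aux (p : ℕ) (B : Fin p → ℕ → ℝ)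
    (hB : ∀ d : Fin p → ℕ, StrictMono d → 0 ≤ (Matrix.of fun i j => B i (d j)).det)
    (c : Fin p → ℕ) (hc : StrictMono c) (w : Fin p → ℝ) (hw : ∀ j, 0 ≤ w j) :
    ∀ (q m : ℕ), m + q = p → ∀ (k : Fin p → ℕ),
      (∀ j : Fin p, (j : ℕ) < m → (k j = c j ∨ (c j ≠ 0 ∧ k j + 1 = c j))) →
      0 ≤ (Matrix.of fun (i j : Fin p) => if (j : ℕ) < m then B i (k j)
            else (if c j = 0 then 0 else B i (c j - 1)) + w j * B i (c j)).det := by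
  intro q
  induction q with
  | zero =>
    intro m hm k hk
    have hmp : m = p := by omega
    have hM : (Matrix.of fun (i j : Fin p) => if (j : ℕ) < m then B i (k j)
            else (if c j = 0 then 0 else B i (c j - 1)) + w j * B i (c j))
        = Matrix.of fun i j => B i (k j) := by
      ext i j
      have : (j : ℕ) < m := by have := j.isLt; omega
      simp only [Matrix.of_apply, if_pos this]
    rw [hM]
    have hklt : ∀ j : Fin p, (j : ℕ) < m := by intro j; have := j.isLt; omega
    have hweak : ∀ j l : Fin p, j < l → k j ≤ k l := by
      intro j l hjl
      have h1 := hk j (hklt j)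
      have h2 := hk l (hklt l)
      have h3 : c j < c l := hc hjl
      rcases h1 with h1 | h1 <;> rcases h2 with h2 | h2 <;> omega
    by_cases hsm : StrictMono k
    · exact hB k hsm
    · unfold StrictMono at hsm
      push_neg at hsm
      obtain ⟨j, l, hjl, hle⟩ := hsm
      have hkeq : k j = k l := le_antisymm (hweak j l hjl) hle
      apply le_of_eq
      refine (Matrix.det_zero_of_column_eq (ne_of_lt hjl) ?_).symm
      intro i
      simp only [Matrix.of_apply, hkeq]
  | succ q ih =>
    intro m hm k hk
    have hmp : m < p := by omega
    set j0 : Fin p := ⟨m, hmp⟩ with hj0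
    set v1 : Fin p → ℝ := fun i => if c j0 = 0 then 0 else B i (c j0 - 1) with hv1
    set v2 : Fin p → ℝ := fun i => w j0 * B i (c j0) with hv2
    -- the base matrix with column j0 already "expanded" to pure B · (c j0)
    set M0 : Matrix (Fin p) (Fin p) ℝ := Matrix.of fun (i j : Fin p) =>
        if (j : ℕ) < m + 1 then B i (Function.update k j0 (c j0) j)
        else (if c j = 0 then 0 else B i (c j - 1)) + w j * B i (c j) with hM0
    have hcond : ∀ (y : ℕ), (y = c j0 ∨ (c j0 ≠ 0 ∧ y + 1 = c j0)) →
        ∀ j : Fin p, (j : ℕ) < m + 1 →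
          (Function.update k j0 y j = c j ∨ (c j ≠ 0 ∧ Function.update k j0 y j + 1 = c j)) := by
      intro y hy j hj
      by_cases hjj : j = j0
      · subst hjj; rw [Function.update_self]; exact hy
      · rw [Function.update_of_ne hjj]
        apply hk
        have : (j : ℕ) ≠ m := fun hh => hjj (Fin.ext hh)
        omega
    -- off-column description
    have hoff : ∀ (y : ℕ) (i : Fin p) (j : Fin p), j ≠ j0 →
        (Matrix.of fun (i j : Fin p) => if (j : ℕ) < m + 1 then B i (Function.update k j0 y j)
            else (if c j = 0 then 0 else B i (c j - 1)) + w j * B i (c j)) i j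
        = (Matrix.of fun (i j : Fin p) => if (j : ℕ) < m then B i (k j)
            else (if c j = 0 then 0 else B i (c j - 1)) + w j * B i (c j)) i j := by
      intro y i j hjj
      have hne : (j : ℕ) ≠ m := fun hh => hjj (Fin.ext hh)
      simp only [Matrix.of_apply]
      rw [Function.update_of_ne hjj]
      by_cases hlt : (j : ℕ) < m
      · rw [if_pos (by omega), if_pos hlt]
      · rw [if_neg (by omega), if_neg hlt]
    -- main decomposition
    have hdecomp : (Matrix.of fun (i j : Fin p) => if (j : ℕ) < m then B i (k j)
            else (if c j = 0 then 0 else B i (c j - 1)) + w j * B i (c j))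
        = M0.updateCol j0 (v1 + v2) := by
      ext i j
      by_cases hjj : j = j0
      · subst hjj
        rw [Matrix.updateCol_self]
        simp only [Matrix.of_apply]
        rw [if_neg (by simp [hj0])]
        rfl
      · rw [Matrix.updateCol_ne hjj]
        exact (hoff (c j0) i j hjj).symm
    rw [hdecomp, Matrix.det_updateCol_add]
    have hd2 : 0 ≤ (M0.updateCol j0 v2).det := by
      have hsmul : v2 = w j0 • (fun i => B i (c j0)) := rfl
      rw [hsmul, Matrix.det_updateCol_smul]
      have hself : M0.updateCol j0 (fun i => B i (c j0)) = M0 := by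
        ext i j
        by_cases hjj : j = j0
        · subst hjj
          rw [Matrix.updateCol_self]
          simp only [hM0, Matrix.of_apply]
          rw [if_pos (by simp [hj0])]
          rw [Function.update_self]
        · rw [Matrix.updateCol_ne hjj]
      rw [hself]
      exact mul_nonneg (hw j0) (ih (m+1) (by omega) _ (hcond (c j0) (Or.inl rfl)))
    have hd1 : 0 ≤ (M0.updateCol j0 v1).det := by
      by_cases hc0 : c j0 = 0
      · apply le_of_eq
        refine (Matrix.det_eq_zero_of_column_eq_zero j0 ?_).symm
        intro i
        rw [Matrix.updateCol_self]
        simp [hv1, hc0]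
      · have heq : M0.updateCol j0 v1
            = Matrix.of fun (i j : Fin p) => if (j : ℕ) < m + 1 then B i (Function.update k j0 (c j0 - 1) j)
              else (if c j = 0 then 0 else B i (c j - 1)) + w j * B i (c j) := by
          ext i j
          by_cases hjj : j = j0
          · subst hjj
            rw [Matrix.updateCol_self]
            simp only [Matrix.of_apply]
            rw [if_pos (by simp [hj0]), Function.update_self]
            simp [hv1, hc0]
          · rw [Matrix.updateCol_ne hjj]
            exact (hoff (c j0) i j hjj).trans (hoff (c j0 - 1) i j hjj).symm
        rw [heq]
        exact ih (m+1) (by omega) _ (hcond (c j0 - 1) (Or.inr ⟨hc0, by omega⟩))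
    linarith

lemma det_expand (p : ℕ) (B : Fin p → ℕ → ℝ)
    (hB : ∀ d : Fin p → ℕ, StrictMono d → 0 ≤ (Matrix.of fun i j => B i (d j)).det)
    (c : Fin p → ℕ) (hc : StrictMono c) (w : Fin p → ℝ) (hw : ∀ j, 0 ≤ w j) :
    0 ≤ (Matrix.of fun (i j : Fin p) =>
        (if c j = 0 then 0 else B i (c j - 1)) + w j * B i (c j)).det := by
  have h := det_expand_aux p B hB c hc w hw p 0 (by omega) (fun _ => 0) (by intro j hj; omega)
  have hM : (Matrix.of fun (i j : Fin p) => if (j : ℕ) < 0 then B i ((fun _ => 0) j)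
        else (if c j = 0 then 0 else B i (c j - 1)) + w j * B i (c j))
      = Matrix.of fun (i j : Fin p) =>
        (if c j = 0 then 0 else B i (c j - 1)) + w j * B i (c j) := by
    ext i j
    simp
  rwa [hM] at h
lemma main_TN : ∀ (N : ℕ) (a e : ℕ → ℝ), Monotone a → IsRGS a e →
    ∀ (p : ℕ) (r c : Fin p → ℕ), StrictMono r → StrictMono c → (∀ i, r i < N) →
    0 ≤ (Matrix.of fun i j => Smat a e (r i) (c j)).det := by
  intro N
  induction N with
  | zero =>
    intro a e ha he p r c hr hc hrN
    match p with
    | 0 => rw [Matrix.det_fin_zero]; norm_num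
    | p+1 => exact absurd (hrN 0) (by omega)
  | succ N ih =>
    intro a e ha he p r c hr hc hrN
    have step : ∀ (p : ℕ) (r c : Fin p → ℕ), StrictMono r → StrictMono c →
        (∀ i, r i < N + 1) → (∀ i, 1 ≤ r i) →
        0 ≤ (Matrix.of fun i j => Smat a e (r i) (c j)).det := by
      intro p r c hr hc hrN hr1
      have he0 : e 0 ≤ a 0 := he 0
      have hrm : StrictMono fun i : Fin p => r i - 1 := by
        intro i l h
        have h2 := hr h
        have h3 := hr1 i
        simp only
        omega
      have hrb : ∀ i : Fin p, r i - 1 < N := by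
        intro i
        have := hrN i
        have := hr1 i
        omega
      rcases eq_or_lt_of_le he0 with heq | hlt
      · -- equality case: e 0 = a 0
        have hentry : ∀ (i j : Fin p), Smat a e (r i) (c j) =
            predf (Smat (fun n => a (n+1)) (fun n => e (n+1)) (r i - 1)) (c j) := by
          intro i j
          have h1 : r i = (r i - 1) + 1 := by have := hr1 i; omega
          have h2 := Smat_step_eq a e heq (r i - 1) (c j)
          rw [← h1] at h2
          exact h2
        match p with
        | 0 => rw [Matrix.det_fin_zero]; norm_num
        | p+1 =>
          by_cases hc0 : c 0 = 0
          · apply le_of_eq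
            refine (Matrix.det_eq_zero_of_column_eq_zero 0 ?_).symm
            intro i
            simp only [Matrix.of_apply]
            rw [hentry i 0, hc0]
            rfl
          · have hc1 : ∀ j : Fin (p+1), 1 ≤ c j := by
              intro j
              have : c 0 ≤ c j := hc.monotone (Fin.zero_le j)
              omega
            have hMeq : (Matrix.of fun (i j : Fin (p+1)) => Smat a e (r i) (c j)) =
                Matrix.of fun (i j : Fin (p+1)) =>
                  Smat (fun n => a (n+1)) (fun n => e (n+1)) (r i - 1) (c j - 1) := by
              ext i j
              rw [Matrix.of_apply, Matrix.of_apply, hentry i j]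
              have h2 : c j = (c j - 1) + 1 := by have := hc1 j; omega
              rw [h2]
              rfl
            rw [hMeq]
            refine ih (fun n => a (n+1)) (fun n => e (n+1))
              (fun i l h => ha (Nat.succ_le_succ h)) (isRGS_shift_eq a e he heq)
              (p+1) (fun i => r i - 1) (fun j => c j - 1) hrm ?_ hrb
            intro j l h
            have h2 := hc h
            have h3 := hc1 j
            simp only
            omega
      · -- strict case: e 0 < a 0
        have hne : e 0 ≠ a 0 := ne_of_lt hlt
        have hentry : ∀ (i j : Fin p), Smat a e (r i) (c j) =
            (if c j = 0 then 0 else Smat a (fun n => e (n+1)) (r i - 1) (c j - 1))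
              + (a (c j) - e 0) * Smat a (fun n => e (n+1)) (r i - 1) (c j) := by
          intro i j
          have h1 : r i = (r i - 1) + 1 := by have := hr1 i; omega
          have h2 := Smat_step a e (r i - 1) (c j)
          rw [← h1] at h2
          rw [h2]
          congr 1
          cases hcj : c j with
          | zero => rfl
          | succ n => rfl
        have hMeq : (Matrix.of fun (i j : Fin p) => Smat a e (r i) (c j)) =
            Matrix.of fun (i j : Fin p) =>
              (if c j = 0 then 0 else Smat a (fun n => e (n+1)) (r i - 1) (c j - 1))
                + (a (c j) - e 0) * Smat a (fun n => e (n+1)) (r i - 1) (c j) := by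
          ext i j
          rw [Matrix.of_apply, Matrix.of_apply, hentry i j]
        rw [hMeq]
        refine det_expand p (fun i k => Smat a (fun n => e (n+1)) (r i - 1) k) ?_ c hc
          (fun j => a (c j) - e 0) ?_
        · intro d hd
          exact ih a (fun n => e (n+1)) ha (isRGS_shift_ne a e he hne)
            p (fun i => r i - 1) d hrm hd hrb
        · intro j
          have : a 0 ≤ a (c j) := ha (Nat.zero_le _)
          linarith
    match p with
    | 0 => rw [Matrix.det_fin_zero]; norm_num
    | p+1 =>
      by_cases hr0 : r 0 = 0
      · by_cases hc0 : c 0 = 0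
        · rw [Matrix.det_succ_row_zero]
          have hmain : 0 ≤ ((Matrix.of fun (i j : Fin (p+1)) =>
              Smat a e (r i) (c j)).submatrix Fin.succ (Fin.succAbove 0)).det := by
            have hsub : ((Matrix.of fun (i j : Fin (p+1)) =>
                Smat a e (r i) (c j)).submatrix Fin.succ (Fin.succAbove 0)) =
                Matrix.of fun (i j : Fin p) => Smat a e (r i.succ) (c j.succ) := by
              ext i j
              rw [Matrix.submatrix_apply, Fin.succAbove_zero]
              rfl
            rw [hsub]
            refine step p (fun i => r i.succ) (fun j => c j.succ)
              (fun i l h => hr (Fin.succ_lt_succ_iff.mpr h))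
              (fun i l h => hc (Fin.succ_lt_succ_iff.mpr h))
              (fun i => hrN i.succ) ?_
            intro i
            have h4 : r 0 < r i.succ := hr (Fin.succ_pos i)
            omega
          rw [Fintype.sum_eq_single (0 : Fin (p+1))]
          · simp only [Fin.val_zero, pow_zero, one_mul, Matrix.of_apply]
            rw [hr0, hc0]
            have h00 : Smat a e 0 0 = 1 := rfl
            rw [h00, one_mul]
            exact hmain
          · intro j hj
            have hcj : 0 < c j := by
              have : c 0 < c j := hc (by simpa [Fin.pos_iff_ne_zero] using hj)
              omega
            have hz : Smat a e (r 0) (c j) = 0 := by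
              rw [hr0]; exact Smat_tri a e 0 (c j) hcj
            rw [Matrix.of_apply, hz]
            ring
        · apply le_of_eq
          refine (Matrix.det_eq_zero_of_row_eq_zero 0 ?_).symm
          intro j
          have hcj : 0 < c j := by
            have : c 0 ≤ c j := hc.monotone (Fin.zero_le j)
            omega
          rw [Matrix.of_apply, hr0]
          exact Smat_tri a e 0 (c j) hcj
      · refine step (p+1) r c hr hc hrN ?_
        intro i
        have : r 0 ≤ r i := hr.monotone (Fin.zero_le i)
        omega

theorem stmt0' (a e : ℕ → ℝ) (ha : Monotone a) (he : IsRGS a e)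
    (S : ℕ → ℕ → ℝ) (hS : SaeRel a e S) :
    TotallyNonneg S := by
  intro p r c hr hc
  have hMeq : (Matrix.of fun i j => S (r i) (c j)) =
      Matrix.of fun i j => Smat a e (r i) (c j) := by
    ext i j
    rw [Matrix.of_apply, Matrix.of_apply, Sae_unique a e S hS]
  rw [hMeq]
  match p with
  | 0 => rw [Matrix.det_fin_zero]; norm_num
  | p+1 =>
    refine main_TN (r (Fin.last p) + 1) a e ha he (p+1) r c hr hc ?_
    intro i
    have : r i ≤ r (Fin.last p) := hr.monotone (Fin.le_last i)
    omega

theorem stmt0 (a e : ℕ → ℝ) (ha : Monotone a) (he : IsRGS a e)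
    (S : ℕ → ℕ → ℝ) (hS : SaeRel a e S) :
    TotallyNonneg S := by
  exact stmt0' a e ha he S hS
end

section
/- Let a = (a_1, a_2, ...) be a non-decreasing sequence of real numbers and let e = (e_1, e_2, ...) be a real sequence that is NOT a restricted growth sequence relative to a. Then the matrix S^{a,e} has a negative entry: there exist m ≥ 0 and 0 ≤ k ≤ m with S^{a,e}(m,k) < 0. In particular, S^{a,e} is not totally non-negative. -/
open Polynomial Finset

noncomputable def Tmat (a e : ℕ → ℝ) : ℕ → ℕ → ℝ
  | 0, 0 => 1
  | 0, _ + 1 => 0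
  | m + 1, 0 => (a 0 - e m) * Tmat a e m 0
  | m + 1, k + 1 => Tmat a e m k + (a (k + 1) - e m) * Tmat a e m (k + 1)

lemma Tmat_zero (a e : ℕ → ℝ) : ∀ m k : ℕ, m < k → Tmat a e m k = 0 := by
  intro m
  induction m with
  | zero => intro k hk; match k, hk with | k + 1, _ => rfl
  | succ m ih =>
    intro k hk
    match k, hk with
    | k + 1, hk =>
      have h1 : Tmat a e m k = 0 := ih k (by omega)
      have h2 : Tmat a e m (k + 1) = 0 := ih (k + 1) (by omega)
      simp [Tmat, h1, h2]

lemma Tmat_poly (a e : ℕ → ℝ) (m : ℕ) :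
    ∏ i ∈ Finset.range m, (X - C (e i)) =
      ∑ k ∈ Finset.range (m + 1), C (Tmat a e m k) * ∏ i ∈ Finset.range k, (X - C (a i)) := by
  induction m with
  | zero => simp [Tmat]
  | succ m ih =>
    rw [prod_range_succ, ih, Finset.sum_mul]
    have step : ∀ k : ℕ,
        C (Tmat a e m k) * (∏ i ∈ Finset.range k, (X - C (a i))) * (X - C (e m)) =
        C (Tmat a e m k) * (∏ i ∈ Finset.range (k + 1), (X - C (a i)))
          + C ((a k - e m) * Tmat a e m k) * ∏ i ∈ Finset.range k, (X - C (a i)) := by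
      intro k
      rw [prod_range_succ]
      have : (X - C (e m)) = (X - C (a k)) + C (a k - e m) := by
        rw [C_sub]; ring
      rw [this, C_mul, C_sub]
      ring
    rw [Finset.sum_congr rfl fun k _ => step k, Finset.sum_add_distrib]
    -- target sum over range (m+2)
    rw [Finset.sum_range_succ' (fun k => C (Tmat a e (m + 1) k) * ∏ i ∈ Finset.range k, (X - C (a i))) (m + 1)]
    have e1 : ∀ k : ℕ, C (Tmat a e (m + 1) (k + 1)) * ∏ i ∈ Finset.range (k + 1), (X - C (a i))
        = C (Tmat a e m k) * (∏ i ∈ Finset.range (k + 1), (X - C (a i)))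
          + C ((a (k + 1) - e m) * Tmat a e m (k + 1)) * ∏ i ∈ Finset.range (k + 1), (X - C (a i)) := by
      intro k
      show C (Tmat a e m k + (a (k + 1) - e m) * Tmat a e m (k + 1)) * _ = _
      rw [C_add, C_mul, C_sub]; ring
    rw [Finset.sum_congr rfl fun k _ => e1 k, Finset.sum_add_distrib]
    have e0 : C (Tmat a e (m + 1) 0) * ∏ i ∈ Finset.range 0, (X - C (a i))
        = C ((a 0 - e m) * Tmat a e m 0) * ∏ i ∈ Finset.range 0, (X - C (a i)) := rfl
    rw [e0]
    have shift : ∑ k ∈ Finset.range (m + 1), C ((a k - e m) * Tmat a e m k) * ∏ i ∈ Finset.range k, (X - C (a i))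
        = (∑ k ∈ Finset.range m, C ((a (k + 1) - e m) * Tmat a e m (k + 1)) * ∏ i ∈ Finset.range (k + 1), (X - C (a i)))
          + C ((a 0 - e m) * Tmat a e m 0) * ∏ i ∈ Finset.range 0, (X - C (a i)) := by
      rw [Finset.sum_range_succ' (fun k => C ((a k - e m) * Tmat a e m k) * ∏ i ∈ Finset.range k, (X - C (a i))) m]
    rw [shift]
    have last : ∑ k ∈ Finset.range (m + 1), C ((a (k + 1) - e m) * Tmat a e m (k + 1)) * ∏ i ∈ Finset.range (k + 1), (X - C (a i))
        = ∑ k ∈ Finset.range m, C ((a (k + 1) - e m) * Tmat a e m (k + 1)) * ∏ i ∈ Finset.range (k + 1), (X - C (a i)) := by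
      rw [Finset.sum_range_succ, Tmat_zero a e m (m + 1) (by omega)]
      simp
    rw [last]
    ring

lemma prodP_monic (a : ℕ → ℝ) (k : ℕ) : (∏ i ∈ Finset.range k, (X - C (a i))).Monic :=
  monic_prod_of_monic _ _ fun i _ => monic_X_sub_C (a i)

lemma prodP_natDegree (a : ℕ → ℝ) (k : ℕ) :
    (∏ i ∈ Finset.range k, (X - C (a i))).natDegree = k := by
  rw [natDegree_prod_of_monic _ _ fun i _ => monic_X_sub_C (a i)]
  simp

lemma indep (a : ℕ → ℝ) (c : ℕ → ℝ) : ∀ n : ℕ,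
    (∑ k ∈ Finset.range n, C (c k) * ∏ i ∈ Finset.range k, (X - C (a i))) = 0 →
    ∀ k < n, c k = 0 := by
  intro n
  induction n with
  | zero => intro _ k hk; omega
  | succ n ih =>
    intro h k hk
    have hcn : c n = 0 := by
      have := congrArg (fun p : Polynomial ℝ => p.coeff n) h
      simp only [finset_sum_coeff, coeff_zero] at this
      rw [Finset.sum_eq_single n] at this
      · rw [coeff_C_mul] at this
        have hco : (∏ i ∈ Finset.range n, (X - C (a i))).coeff n = 1 := by
          have h2 := (prodP_monic a n).coeff_natDegree
          rwa [prodP_natDegree] at h2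
        rwa [hco, mul_one] at this
      · intro b hb hbn
        rw [Finset.mem_range] at hb
        rw [coeff_C_mul, coeff_eq_zero_of_natDegree_lt, mul_zero]
        rw [prodP_natDegree]
        omega
      · intro hn; exact absurd (Finset.self_mem_range_succ n) hn
    rcases Nat.lt_succ_iff_lt_or_eq.mp hk with hk | hk
    · apply ih _ _ hk
      rw [Finset.sum_range_succ, hcn] at h
      simpa using h
    · rw [hk]; exact hcn

lemma Sae_eq_Tmat (a e : ℕ → ℝ) (S : ℕ → ℕ → ℝ) (hS : SaeRel a e S) :
    ∀ m k : ℕ, S m k = Tmat a e m k := by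
  intro m k
  rcases lt_or_ge m k with h | h
  · rw [hS.1 m k h, Tmat_zero a e m k h]
  · have hsum : (∑ j ∈ Finset.range (m + 1),
        C (S m j - Tmat a e m j) * ∏ i ∈ Finset.range j, (X - C (a i))) = 0 := by
      have h1 := hS.2 m
      have h2 := Tmat_poly a e m
      have : ∀ j : ℕ, C (S m j - Tmat a e m j) * ∏ i ∈ Finset.range j, (X - C (a i))
          = C (S m j) * (∏ i ∈ Finset.range j, (X - C (a i)))
            - C (Tmat a e m j) * ∏ i ∈ Finset.range j, (X - C (a i)) := by
        intro j; rw [C_sub]; ring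
      rw [Finset.sum_congr rfl fun j _ => this j, Finset.sum_sub_distrib, ← h1, ← h2, sub_self]
    have := indep a _ (m + 1) hsum k (by omega)
    linarith

lemma rgsF_le (a e : ℕ → ℝ) : ∀ m : ℕ, rgsF a e m ≤ m := by
  intro m
  induction m with
  | zero => simp [rgsF]
  | succ m ih =>
    show (if e m = a (rgsF a e m) then rgsF a e m + 1 else rgsF a e m) ≤ m + 1
    split <;> omega

lemma key (a e : ℕ → ℝ) (ha : Monotone a) (N : ℕ)
    (hmin : ∀ j < N, e j ≤ a (rgsF a e j)) :
    ∀ m ≤ N, (∀ k < rgsF a e m, Tmat a e m k = 0) ∧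
      0 < Tmat a e m (rgsF a e m) ∧ (∀ k, 0 ≤ Tmat a e m k) := by
  intro m
  induction m with
  | zero =>
    intro _
    refine ⟨by simp [rgsF], by norm_num [rgsF, Tmat], ?_⟩
    intro k
    match k with
    | 0 => norm_num [Tmat]
    | k + 1 => norm_num [Tmat]
  | succ m ih =>
    intro hm
    obtain ⟨hz, hp, hnn⟩ := ih (by omega)
    have hme : e m ≤ a (rgsF a e m) := hmin m (by omega)
    set f := rgsF a e m with hf
    have hnn' : ∀ k, 0 ≤ Tmat a e (m + 1) k := by
      intro k
      match k with
      | 0 =>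
        show 0 ≤ (a 0 - e m) * Tmat a e m 0
        rcases Nat.eq_zero_or_pos f with h0 | h0
        · have : e m ≤ a 0 := h0 ▸ hme
          exact mul_nonneg (by linarith) (hnn 0)
        · rw [hz 0 h0, mul_zero]
      | k + 1 =>
        show 0 ≤ Tmat a e m k + (a (k + 1) - e m) * Tmat a e m (k + 1)
        rcases lt_or_ge (k + 1) f with h0 | h0
        · rw [hz (k + 1) h0, mul_zero, add_zero]; exact hnn k
        · have : a f ≤ a (k + 1) := ha h0
          exact add_nonneg (hnn k) (mul_nonneg (by linarith) (hnn (k + 1)))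
    have hrg : rgsF a e (m + 1) = if e m = a f then f + 1 else f := rfl
    by_cases heq : e m = a f
    · rw [hrg, if_pos heq]
      refine ⟨?_, ?_, hnn'⟩
      · intro k hk
        match k with
        | 0 =>
          show (a 0 - e m) * Tmat a e m 0 = 0
          rcases Nat.eq_zero_or_pos f with h0 | h0
          · rw [heq, h0, sub_self, zero_mul]
          · rw [hz 0 h0, mul_zero]
        | k + 1 =>
          show Tmat a e m k + (a (k + 1) - e m) * Tmat a e m (k + 1) = 0
          have hkf : k < f := by omega
          rw [hz k hkf, zero_add]
          rcases lt_or_eq_of_le (Nat.succ_le_of_lt hkf) with h0 | h0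
          · rw [hz (k + 1) h0, mul_zero]
          · have h0' : k + 1 = f := h0
            rw [h0', ← heq, sub_self, zero_mul]
      · show 0 < Tmat a e m f + (a (f + 1) - e m) * Tmat a e m (f + 1)
        have h1 : a f ≤ a (f + 1) := ha (by omega)
        have h2 : 0 ≤ (a (f + 1) - e m) * Tmat a e m (f + 1) :=
          mul_nonneg (by linarith) (hnn (f + 1))
        linarith
    · have hlt : e m < a f := lt_of_le_of_ne hme heq
      rw [hrg, if_neg heq]
      refine ⟨?_, ?_, hnn'⟩
      · intro k hk
        match k with
        | 0 =>
          show (a 0 - e m) * Tmat a e m 0 = 0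
          rw [hz 0 (by omega), mul_zero]
        | k + 1 =>
          show Tmat a e m k + (a (k + 1) - e m) * Tmat a e m (k + 1) = 0
          rw [hz k (by omega), hz (k + 1) hk, mul_zero, add_zero]
      · rcases hfv : f with _ | g
        · show 0 < (a 0 - e m) * Tmat a e m 0
          rw [hfv] at hlt hp
          exact mul_pos (by linarith) hp
        · show 0 < Tmat a e m g + (a (g + 1) - e m) * Tmat a e m (g + 1)
          rw [hfv] at hlt hp hz
          rw [hz g (by omega), zero_add]
          exact mul_pos (by linarith) hp

theorem stmt1 (a e : ℕ → ℝ) (ha : Monotone a) (he : ¬ IsRGS a e)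
    (S : ℕ → ℕ → ℝ) (hS : SaeRel a e S) :
    (∃ m k : ℕ, k ≤ m ∧ S m k < 0) ∧ ¬ TotallyNonneg S := by
  have hex : ∃ i : ℕ, a (rgsF a e i) < e i := by
    rw [IsRGS] at he
    push_neg at he
    exact he
  classical
  set N := Nat.find hex with hN
  have hNe : a (rgsF a e N) < e N := Nat.find_spec hex
  have hmin : ∀ j < N, e j ≤ a (rgsF a e j) := by
    intro j hj
    have := Nat.find_min hex hj
    linarith [not_lt.mp this]
  obtain ⟨hz, hp, hnn⟩ := key a e ha N hmin N le_rfl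
  have hneg : Tmat a e (N + 1) (rgsF a e N) < 0 := by
    rcases hfv : rgsF a e N with _ | g
    · show (a 0 - e N) * Tmat a e N 0 < 0
      rw [hfv] at hNe hp
      have : Tmat a e N 0 > 0 := hp
      nlinarith
    · show Tmat a e N g + (a (g + 1) - e N) * Tmat a e N (g + 1) < 0
      rw [hfv] at hNe hp hz
      rw [hz g (by omega), zero_add]
      nlinarith
  have hSneg : S (N + 1) (rgsF a e N) < 0 := by
    rw [Sae_eq_Tmat a e S hS]; exact hneg
  have hle : rgsF a e N ≤ N + 1 := le_trans (rgsF_le a e N) (by omega)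
  refine ⟨⟨N + 1, rgsF a e N, hle, hSneg⟩, ?_⟩
  intro hT
  have := hT 1 (fun _ => N + 1) (fun _ => rgsF a e N)
    (Subsingleton.strictMono _) (Subsingleton.strictMono _)
  rw [Matrix.det_fin_one] at this
  simp only [Matrix.of_apply] at this
  linarith
end

section
/- Let a = (a_1, a_2, ...) be a non-decreasing sequence of real numbers and let e = (e_1, e_2, ...) be a real sequence. Define f by f(1) = 1 and, for i ≥ 1, f(i+1) = f(i) if e_i < a_{f(i)} and f(i+1) = f(i) + 1 if e_i = a_{f(i)} (f(i+1) arbitrary otherwise). Suppose j is the smallest index with e_j > a_{f(j)} (so e_i ≤ a_{f(i)} for all i < j), and set ℓ = f(j). Then S^{a,e}(j, ℓ - 1) < 0. -/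
open Polynomial Finset

namespace SaeAux

noncomputable def P (a : ℕ → ℝ) (k : ℕ) : Polynomial ℝ := ∏ i ∈ Finset.range k, (X - C (a i))

lemma P_monic (a : ℕ → ℝ) (k : ℕ) : (P a k).Monic :=
  monic_prod_of_monic _ _ fun i _ => monic_X_sub_C (a i)

lemma P_natDegree (a : ℕ → ℝ) (k : ℕ) : (P a k).natDegree = k := by
  unfold P
  rw [natDegree_prod]
  · simp [natDegree_X_sub_C]
  · intro i _; exact X_sub_C_ne_zero (a i)

lemma indep (a : ℕ → ℝ) (c : ℕ → ℝ) :
    ∀ n, (∑ k ∈ Finset.range n, C (c k) * P a k) = 0 → ∀ k < n, c k = 0 := by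
  intro n
  induction n with
  | zero => intro _ k hk; omega
  | succ n ih =>
    intro h
    have hcn : c n = 0 := by
      have h1 := congrArg (fun p => Polynomial.coeff p n) h
      simp only [finset_sum_coeff, Polynomial.coeff_zero] at h1
      rw [Finset.sum_range_succ] at h1
      have h2 : ∀ k ∈ Finset.range n, (C (c k) * P a k).coeff n = 0 := by
        intro k hk
        apply Polynomial.coeff_eq_zero_of_natDegree_lt
        calc (C (c k) * P a k).natDegree ≤ (C (c k)).natDegree + (P a k).natDegree :=
              natDegree_mul_le
          _ < n := by simp [P_natDegree, Finset.mem_range.mp hk]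
      rw [Finset.sum_eq_zero h2] at h1
      have h3 : (C (c n) * P a n).coeff n = c n := by
        rw [Polynomial.coeff_C_mul]
        have := (P_monic a n).coeff_natDegree
        rw [P_natDegree] at this
        rw [this, mul_one]
      rw [h3] at h1
      linarith
    intro k hk
    rcases Nat.lt_succ_iff_lt_or_eq.mp hk with h' | rfl
    · apply ih ?_ _ h'
      rw [Finset.sum_range_succ, hcn] at h
      simpa using h
    · exact hcn

lemma recur (a e : ℕ → ℝ) (S : ℕ → ℕ → ℝ) (hS : SaeRel a e S) (m : ℕ) :
    ∀ k, S (m + 1) k = (if k = 0 then (0:ℝ) else S m (k - 1)) + (a k - e m) * S m k := by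
  set c : ℕ → ℝ := fun k =>
    S (m + 1) k - ((if k = 0 then (0:ℝ) else S m (k - 1)) + (a k - e m) * S m k) with hc
  have key : (∑ k ∈ Finset.range (m + 2), C (c k) * P a k) = 0 := by
    have e1 : ∑ k ∈ Finset.range (m + 2), C (S (m+1) k) * P a k
        = ∏ i ∈ Finset.range (m + 1), (X - C (e i)) := (hS.2 (m+1)).symm
    have e2 : ∏ i ∈ Finset.range (m + 1), (X - C (e i))
        = (∑ k ∈ Finset.range (m + 1), C (S m k) * P a k) * (X - C (e m)) := by
      rw [Finset.prod_range_succ, hS.2 m]; rfl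
    have e3 : ∀ k, P a k * (X - C (e m)) = P a (k+1) + C (a k - e m) * P a k := by
      intro k
      have : P a (k+1) = P a k * (X - C (a k)) := Finset.prod_range_succ _ _
      rw [this]
      ring_nf
      rw [map_sub]
      ring
    have e4 : (∑ k ∈ Finset.range (m + 1), C (S m k) * P a k) * (X - C (e m))
        = ∑ k ∈ Finset.range (m + 2), C ((if k = 0 then (0:ℝ) else S m (k - 1)) + (a k - e m) * S m k) * P a k := by
      rw [Finset.sum_mul]
      have lhs : ∑ k ∈ Finset.range (m + 1), C (S m k) * P a k * (X - C (e m))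
          = ∑ k ∈ Finset.range (m + 1), (C (S m k) * P a (k+1) + C ((a k - e m) * S m k) * P a k) := by
        apply Finset.sum_congr rfl
        intro k _
        rw [mul_assoc, e3 k]
        rw [map_mul]
        ring
      rw [lhs, Finset.sum_add_distrib]
      have s1 : ∑ k ∈ Finset.range (m + 1), C (S m k) * P a (k+1)
          = ∑ k ∈ Finset.range (m + 2), C (if k = 0 then (0:ℝ) else S m (k - 1)) * P a k := by
        rw [Finset.sum_range_succ' (fun k => C (if k = 0 then (0:ℝ) else S m (k - 1)) * P a k) (m+1)]
        simp
      have s2 : ∑ k ∈ Finset.range (m + 2), C ((a k - e m) * S m k) * P a k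
          = ∑ k ∈ Finset.range (m + 1), C ((a k - e m) * S m k) * P a k := by
        rw [Finset.sum_range_succ (fun k => C ((a k - e m) * S m k) * P a k) (m+1)]
        rw [hS.1 m (m+1) (by omega)]
        simp
      rw [s1, ← s2, ← Finset.sum_add_distrib]
      apply Finset.sum_congr rfl
      intro k _
      rw [map_add]
      ring
    have : ∑ k ∈ Finset.range (m + 2), C (c k) * P a k
        = ∑ k ∈ Finset.range (m + 2), C (S (m+1) k) * P a k
          - ∑ k ∈ Finset.range (m + 2), C ((if k = 0 then (0:ℝ) else S m (k - 1)) + (a k - e m) * S m k) * P a k := by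
      rw [← Finset.sum_sub_distrib]
      apply Finset.sum_congr rfl
      intro k _
      rw [hc]
      simp only [map_sub]
      ring
    rw [this, e1, e2, e4, sub_self]
  intro k
  by_cases hk : k < m + 2
  · have := indep a c (m + 2) key k hk
    rw [hc] at this
    simp only at this
    linarith
  · push_neg at hk
    rw [hS.1 (m+1) k (by omega), hS.1 m k (by omega), hS.1 m (k-1) (by omega)]
    simp [show k ≠ 0 by omega]

lemma S00 (a e : ℕ → ℝ) (S : ℕ → ℕ → ℝ) (hS : SaeRel a e S) : S 0 0 = 1 := by
  have h0 := hS.2 0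
  have h0' : (C (S 0 0) : Polynomial ℝ) = C 1 := by rw [map_one]; simpa using h0.symm
  exact C_inj.mp h0'

lemma main (a e : ℕ → ℝ) (ha : Monotone a) (S : ℕ → ℕ → ℝ) (hS : SaeRel a e S)
    (j : ℕ) (hmin : ∀ i < j, e i ≤ a (rgsF a e i)) :
    ∀ m, m ≤ j → (∀ k < rgsF a e m, S m k = 0) ∧ 0 < S m (rgsF a e m) ∧ ∀ k, 0 ≤ S m k := by
  intro m
  induction m with
  | zero =>
    intro _
    have h0 : rgsF a e 0 = 0 := rfl
    refine ⟨fun k hk => absurd (h0 ▸ hk) (by omega), ?_, ?_⟩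
    · rw [h0, S00 a e S hS]; norm_num
    · intro k
      rcases Nat.eq_zero_or_pos k with rfl | hk
      · rw [S00 a e S hS]; norm_num
      · rw [hS.1 0 k hk]
  | succ m ih =>
    intro hm
    obtain ⟨hz, hpos, hnn⟩ := ih (by omega)
    have hem : e m ≤ a (rgsF a e m) := hmin m (by omega)
    set f := rgsF a e m with hf
    have hrec := recur a e S hS m
    have hnn' : ∀ k, 0 ≤ S (m+1) k := by
      intro k
      rw [hrec k]
      rcases k with _ | k
      · simp only [↓reduceIte, zero_add]
        by_cases h0 : f = 0
        · have : e m ≤ a 0 := by rw [← h0]; exact hem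
          exact mul_nonneg (by linarith) (hnn 0)
        · rw [hz 0 (Nat.pos_of_ne_zero h0), mul_zero]
      · simp only [Nat.succ_ne_zero, if_false, Nat.add_sub_cancel]
        by_cases hkf : k + 1 < f
        · rw [hz (k+1) hkf, hz k (by omega), mul_zero, add_zero]
        · have h1 : a f ≤ a (k+1) := ha (by omega)
          exact add_nonneg (hnn k) (mul_nonneg (by linarith) (hnn (k+1)))
    by_cases heq : e m = a f
    · have hf1 : rgsF a e (m+1) = f + 1 := by
        simp only [rgsF]
        rw [← hf, if_pos heq]
      refine ⟨?_, ?_, hnn'⟩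
      · intro k hk
        rw [hf1] at hk
        rw [hrec k]
        rcases k with _ | k
        · simp only [↓reduceIte, zero_add]
          by_cases h0 : f = 0
          · have : a 0 - e m = 0 := by rw [heq, h0]; ring
            rw [this, zero_mul]
          · rw [hz 0 (Nat.pos_of_ne_zero h0), mul_zero]
        · simp only [Nat.succ_ne_zero, if_false, Nat.add_sub_cancel]
          rw [hz k (by omega)]
          by_cases hkf : k + 1 < f
          · rw [hz (k+1) hkf, mul_zero, add_zero]
          · have hkf' : k + 1 = f := by omega
            rw [hkf', heq, sub_self, zero_mul, add_zero]
      · rw [hf1, hrec (f+1)]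
        simp only [Nat.succ_ne_zero, if_false, Nat.add_sub_cancel]
        have h1 : a f ≤ a (f+1) := ha (Nat.le_succ f)
        have h2 : 0 ≤ (a (f+1) - e m) * S m (f+1) :=
          mul_nonneg (by linarith) (hnn (f+1))
        linarith
    · have hlt : e m < a f := lt_of_le_of_ne hem heq
      have hf1 : rgsF a e (m+1) = f := by
        simp only [rgsF]
        rw [← hf, if_neg heq]
      refine ⟨?_, ?_, hnn'⟩
      · intro k hk
        rw [hf1] at hk
        rw [hrec k]
        rcases k with _ | k
        · simp only [↓reduceIte, zero_add]
          rw [hz 0 hk, mul_zero]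
        · simp only [Nat.succ_ne_zero, if_false, Nat.add_sub_cancel]
          rw [hz k (by omega), hz (k+1) hk, mul_zero, add_zero]
      · rw [hf1, hrec f]
        by_cases h0 : f = 0
        · rw [if_pos h0, zero_add]
          exact mul_pos (by linarith) hpos
        · rw [if_neg h0, hz (f-1) (by omega), zero_add]
          exact mul_pos (by linarith) hpos

end SaeAux

/-- If `j` is the smallest (0-based) index at which `e` exceeds its cap `a_{f(j)}`
(so `e i ≤ a_{f(i)}` for all `i < j`), and `ℓ = f(j)` (so the 0-based cap index is
`rgsF a e j = ℓ - 1`), then `S^{a,e}(j, ℓ-1) < 0` (here the matrix row index is the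
1-based index of `e j`, namely `j + 1`). -/
theorem stmt2 (a e : ℕ → ℝ) (ha : Monotone a)
    (S : ℕ → ℕ → ℝ) (hS : SaeRel a e S)
    (j : ℕ) (hj : a (rgsF a e j) < e j) (hmin : ∀ i < j, e i ≤ a (rgsF a e i)) :
    S (j + 1) (rgsF a e j) < 0 := by
  obtain ⟨hz, hpos, -⟩ := SaeAux.main a e ha S hS j hmin j le_rfl
  set ℓ := rgsF a e j with hℓ
  rw [SaeAux.recur a e S hS j ℓ]
  by_cases h0 : ℓ = 0
  · rw [if_pos h0, zero_add]
    exact mul_neg_of_neg_of_pos (by linarith) hpos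
  · rw [if_neg h0, hz (ℓ-1) (by omega), zero_add]
    exact mul_neg_of_neg_of_pos (by linarith) hpos
end

section
/- Let (b_1, b_2, ...) be a non-decreasing sequence of positive integers, and for each m let B_m be the Ferrers board with m columns in which column i has b_i cells, i.e., the set of cells {(i,j) : 1 ≤ j ≤ m, 1 ≤ i ≤ b_j}. Let R_k(B_m) denote the number of placements of k non-attacking rooks on B_m, i.e., the number of k-element subsets of the cells of B_m in which no two cells share a row coordinate and no two cells share a column coordinate. Then the infinite matrix whose (m,k) entry (m, k ≥ 0) is R_{m-k}(B_m) when k ≤ m and 0 when k > m is totally non-negative. -/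
/-- The number of placements of `k` non-attacking rooks on the Ferrers board `B_m`
with `m` columns, whose `j`-th column (`1 ≤ j ≤ m`) consists of the cells
`(i, j)` with `1 ≤ i ≤ b j`. -/
noncomputable def rookNum (b : ℕ → ℕ) (m k : ℕ) : ℕ :=
  Nat.card {P : Finset (ℕ × ℕ) // P.card = k ∧
    (∀ c ∈ P, 1 ≤ c.2 ∧ c.2 ≤ m ∧ 1 ≤ c.1 ∧ c.1 ≤ b c.2) ∧
    ∀ c ∈ P, ∀ c' ∈ P, c ≠ c' → c.1 ≠ c'.1 ∧ c.2 ≠ c'.2}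

open Classical

def rpred (b : ℕ → ℕ) (m k : ℕ) (P : Finset (ℕ × ℕ)) : Prop :=
  P.card = k ∧
    (∀ c ∈ P, 1 ≤ c.2 ∧ c.2 ≤ m ∧ 1 ≤ c.1 ∧ c.1 ≤ b c.2) ∧
    ∀ c ∈ P, ∀ c' ∈ P, c ≠ c' → c.1 ≠ c'.1 ∧ c.2 ≠ c'.2

noncomputable def grid (b : ℕ → ℕ) (m : ℕ) : Finset (ℕ × ℕ) :=
  Finset.Icc 1 ((Finset.Icc 1 m).sup b) ×ˢ Finset.Icc 1 m

open Classical in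
noncomputable def rookSet (b : ℕ → ℕ) (m k : ℕ) : Finset (Finset (ℕ × ℕ)) :=
  (grid b m).powerset.filter (rpred b m k)

open Classical in
lemma rookNum_eq_card (b : ℕ → ℕ) (m k : ℕ) :
    rookNum b m k = (rookSet b m k).card := by
  have h1 : rookNum b m k = Nat.card {P : Finset (ℕ × ℕ) // rpred b m k P} := rfl
  rw [h1, ← Nat.card_eq_finsetCard]
  refine Nat.card_congr (Equiv.subtypeEquivRight fun P => ?_)
  simp only [rookSet, Finset.mem_filter, Finset.mem_powerset]
  constructor
  · intro h
    refine ⟨fun c hc => ?_, h⟩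
    obtain ⟨h1, h2, h3, h4⟩ := h.2.1 c hc
    simp only [grid, Finset.mem_product, Finset.mem_Icc]
    exact ⟨⟨h3, le_trans h4 (Finset.le_sup (Finset.mem_Icc.2 ⟨h1, h2⟩))⟩, h1, h2⟩
  · exact fun h => h.2

lemma mem_rookSet {b : ℕ → ℕ} {m k : ℕ} {P : Finset (ℕ × ℕ)} :
    P ∈ rookSet b m k ↔ rpred b m k P := by
  simp only [rookSet, Finset.mem_filter, Finset.mem_powerset]
  constructor
  · exact fun h => h.2
  · intro h
    refine ⟨fun c hc => ?_, h⟩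
    obtain ⟨h1, h2, h3, h4⟩ := h.2.1 c hc
    simp only [grid, Finset.mem_product, Finset.mem_Icc]
    exact ⟨⟨h3, le_trans h4 (Finset.le_sup (Finset.mem_Icc.2 ⟨h1, h2⟩))⟩, h1, h2⟩

lemma snd_injOn {b : ℕ → ℕ} {m k : ℕ} {P : Finset (ℕ × ℕ)} (h : rpred b m k P) :
    Set.InjOn Prod.snd (P : Set (ℕ × ℕ)) := by
  intro c hc c' hc' hcc
  by_contra hne
  exact ((h.2.2 c hc c' hc' hne).2 hcc).elim

lemma fst_injOn {b : ℕ → ℕ} {m k : ℕ} {P : Finset (ℕ × ℕ)} (h : rpred b m k P) :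
    Set.InjOn Prod.fst (P : Set (ℕ × ℕ)) := by
  intro c hc c' hc' hcc
  by_contra hne
  exact ((h.2.2 c hc c' hc' hne).1 hcc).elim

lemma rpred_card_le_cols {b : ℕ → ℕ} {m k : ℕ} {P : Finset (ℕ × ℕ)}
    (h : rpred b m k P) : k ≤ m := by
  have h2 : P.image Prod.snd ⊆ Finset.Icc 1 m := by
    intro j hj
    obtain ⟨c, hc, rfl⟩ := Finset.mem_image.1 hj
    exact Finset.mem_Icc.2 ⟨(h.2.1 c hc).1, (h.2.1 c hc).2.1⟩
  have h3 := Finset.card_le_card h2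
  rwa [Finset.card_image_of_injOn (snd_injOn h), h.1, Nat.card_Icc, Nat.add_sub_cancel] at h3

lemma rpred_card_le_rows {b : ℕ → ℕ} {m k : ℕ} {P : Finset (ℕ × ℕ)}
    (hmono : ∀ i, 1 ≤ i → i ≤ m → b i ≤ b m)
    (h : rpred b m k P) : k ≤ b m := by
  have h2 : P.image Prod.fst ⊆ Finset.Icc 1 (b m) := by
    intro j hj
    obtain ⟨c, hc, rfl⟩ := Finset.mem_image.1 hj
    obtain ⟨h1', h2', h3', h4'⟩ := h.2.1 c hc
    exact Finset.mem_Icc.2 ⟨h3', le_trans h4' (hmono c.2 h1' h2')⟩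
  have h3 := Finset.card_le_card h2
  rwa [Finset.card_image_of_injOn (fst_injOn h), h.1, Nat.card_Icc, Nat.add_sub_cancel] at h3

lemma rookNum_zero (b : ℕ → ℕ) (m : ℕ) : rookNum b m 0 = 1 := by
  rw [rookNum_eq_card]
  have : rookSet b m 0 = {∅} := by
    ext P
    rw [mem_rookSet, Finset.mem_singleton]
    constructor
    · intro h
      exact Finset.card_eq_zero.1 h.1
    · rintro rfl
      exact ⟨rfl, by simp, by simp⟩
  rw [this, Finset.card_singleton]

lemma rookNum_eq_zero_of_cols_lt {b : ℕ → ℕ} {m k : ℕ} (h : m < k) :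
    rookNum b m k = 0 := by
  rw [rookNum_eq_card, Finset.card_eq_zero]
  ext P
  simp only [Finset.notMem_empty, iff_false, mem_rookSet]
  intro hP
  exact absurd (rpred_card_le_cols hP) (not_le.2 h)

lemma rookNum_eq_zero_of_rows_lt {b : ℕ → ℕ} {m k : ℕ}
    (hmono : ∀ i, 1 ≤ i → i ≤ m → b i ≤ b m) (h : b m < k) :
    rookNum b m k = 0 := by
  rw [rookNum_eq_card, Finset.card_eq_zero]
  ext P
  simp only [Finset.notMem_empty, iff_false, mem_rookSet]
  intro hP
  exact absurd (rpred_card_le_rows hmono hP) (not_le.2 h)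

lemma rookNum_rec (b : ℕ → ℕ) (m k : ℕ)
    (hmono : ∀ i j, 1 ≤ i → i ≤ j → j ≤ m + 1 → b i ≤ b j) :
    rookNum b (m+1) (k+1) = rookNum b m (k+1) + (b (m+1) - k) * rookNum b m k := by
  classical
  set S2 : Finset (Finset (ℕ × ℕ)) :=
    (rookSet b (m+1) (k+1)).filter (fun P => ∃ c ∈ P, c.2 = m + 1) with hS2
  set S1 : Finset (Finset (ℕ × ℕ)) :=
    (rookSet b (m+1) (k+1)).filter (fun P => ¬ ∃ c ∈ P, c.2 = m + 1) with hS1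
  have hsplit : (rookSet b (m+1) (k+1)).card = S2.card + S1.card := by
    rw [hS1, hS2, Finset.card_filter_add_card_filter_not]
  have hmem1 : ∀ P : Finset (ℕ × ℕ),
      P ∈ S1 ↔ rpred b (m+1) (k+1) P ∧ ¬ ∃ c ∈ P, c.2 = m + 1 := by
    intro P; rw [hS1, Finset.mem_filter, mem_rookSet]
  have hmem2 : ∀ P : Finset (ℕ × ℕ),
      P ∈ S2 ↔ rpred b (m+1) (k+1) P ∧ ∃ c ∈ P, c.2 = m + 1 := by
    intro P; rw [hS2, Finset.mem_filter, mem_rookSet]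
  -- S1 is the rook placements avoiding the last column
  have h1 : S1 = rookSet b m (k+1) := by
    ext P
    rw [hmem1, mem_rookSet]
    constructor
    · rintro ⟨⟨hc, hb, ha⟩, hno⟩
      push_neg at hno
      refine ⟨hc, fun c hc' => ?_, ha⟩
      obtain ⟨u1, u2, u3, u4⟩ := hb c hc'
      have := hno c hc'
      exact ⟨u1, by omega, u3, u4⟩
    · rintro ⟨hc, hb, ha⟩
      refine ⟨⟨hc, fun c hc' => ?_, ha⟩, ?_⟩
      · obtain ⟨u1, u2, u3, u4⟩ := hb c hc'
        exact ⟨u1, by omega, u3, u4⟩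
      · push_neg
        intro c hc'
        have := (hb c hc').2.1
        omega
  -- S2 is in bijection with pairs (placement on B_m, free row in column m+1)
  set T : Finset ((_ : Finset (ℕ × ℕ)) × ℕ) :=
    (rookSet b m k).sigma
      (fun Q => Finset.Icc 1 (b (m+1)) \ Q.image Prod.fst) with hT
  have himg : ∀ Q ∈ rookSet b m k, Q.image Prod.fst ⊆ Finset.Icc 1 (b (m+1)) := by
    intro Q hQ i hi
    obtain ⟨c, hc, rfl⟩ := Finset.mem_image.1 hi
    obtain ⟨u1, u2, u3, u4⟩ := (mem_rookSet.1 hQ).2.1 c hc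
    exact Finset.mem_Icc.2 ⟨u3, u4.trans (hmono c.2 (m+1) u1 (by omega) (le_refl _))⟩
  have hcols : ∀ Q ∈ rookSet b m k, ∀ c ∈ Q, c.2 ≤ m := by
    intro Q hQ c hc
    exact ((mem_rookSet.1 hQ).2.1 c hc).2.1
  have h2 : T.card = S2.card := by
    refine Finset.card_bij (fun a _ => insert (a.2, m+1) a.1) ?_ ?_ ?_
    · -- maps into S2
      rintro ⟨Q, i⟩ hQi
      obtain ⟨hQ, hi⟩ := Finset.mem_sigma.1 hQi
      have hQP := mem_rookSet.1 hQ
      have hicc := Finset.mem_sdiff.1 hi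
      have hii := Finset.mem_Icc.1 hicc.1
      have hnot : (i, m+1) ∉ Q := by
        intro hmem
        have := hcols Q hQ _ hmem
        omega
      rw [hmem2]
      constructor
      · refine ⟨?_, ?_, ?_⟩
        · rw [Finset.card_insert_of_notMem hnot, hQP.1]
        · intro c hc
          rcases Finset.mem_insert.1 hc with rfl | hc'
          · exact ⟨by omega, le_refl _, hii.1, hii.2⟩
          · obtain ⟨u1, u2, u3, u4⟩ := hQP.2.1 c hc'
            exact ⟨u1, by omega, u3, u4⟩
        · intro c hc c' hc' hne
          rcases Finset.mem_insert.1 hc with rfl | hc1 <;>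
            rcases Finset.mem_insert.1 hc' with rfl | hc2
          · exact absurd rfl hne
          · constructor
            · intro hfst
              apply hicc.2
              exact Finset.mem_image.2 ⟨c', hc2, hfst.symm⟩
            · have := hcols Q hQ _ hc2
              simp only []
              omega
          · constructor
            · intro hfst
              apply hicc.2
              exact Finset.mem_image.2 ⟨c, hc1, hfst⟩
            · have := hcols Q hQ _ hc1
              simp only []
              omega
          · exact hQP.2.2 c hc1 c' hc2 hne
      · exact ⟨(i, m+1), Finset.mem_insert_self _ _, rfl⟩
    · -- injective
      rintro ⟨Q, i⟩ hQi ⟨Q', i'⟩ hQi' heqq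
      have heq : insert (i, m+1) Q = insert (i', m+1) Q' := heqq
      obtain ⟨hQ, hi⟩ := Finset.mem_sigma.1 hQi
      obtain ⟨hQ', hi'⟩ := Finset.mem_sigma.1 hQi'
      have hQeq : Q = Q' := by
        ext c
        constructor
        · intro hc
          have : c ∈ insert (i', m+1) Q' := heq ▸ Finset.mem_insert_of_mem hc
          rcases Finset.mem_insert.1 this with rfl | h
          · have := hcols Q hQ _ hc; omega
          · exact h
        · intro hc
          have : c ∈ insert (i, m+1) Q := heq ▸ Finset.mem_insert_of_mem hc
          rcases Finset.mem_insert.1 this with rfl | h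
          · have := hcols Q' hQ' _ hc; omega
          · exact h
      subst hQeq
      have : (i, m+1) ∈ insert (i', m+1) Q := heq ▸ Finset.mem_insert_self _ _
      rcases Finset.mem_insert.1 this with h | h
      · have : i = i' := congrArg Prod.fst h
        subst this; rfl
      · have := hcols Q hQ _ h; omega
    · -- surjective
      intro P hP
      rw [hmem2] at hP
      obtain ⟨hPP, a0, ha0, ha0c⟩ := hP
      refine ⟨⟨P.erase a0, a0.1⟩, ?_, ?_⟩
      · rw [Finset.mem_sigma]
        have hQpred : rpred b m k (P.erase a0) := by
          refine ⟨?_, ?_, ?_⟩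
          · rw [Finset.card_erase_of_mem ha0, hPP.1]
            omega
          · intro c hc
            have hcP := Finset.mem_of_mem_erase hc
            have hca0 : c ≠ a0 := Finset.ne_of_mem_erase hc
            obtain ⟨u1, u2, u3, u4⟩ := hPP.2.1 c hcP
            have : c.2 ≠ m + 1 := by
              intro hcc
              exact (hPP.2.2 c hcP a0 ha0 hca0).2 (by omega)
            exact ⟨u1, by omega, u3, u4⟩
          · intro c hc c' hc' hne
            exact hPP.2.2 c (Finset.mem_of_mem_erase hc) c' (Finset.mem_of_mem_erase hc') hne
        constructor
        · exact mem_rookSet.2 hQpred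
        · rw [Finset.mem_sdiff]
          constructor
          · obtain ⟨u1, u2, u3, u4⟩ := hPP.2.1 a0 ha0
            exact Finset.mem_Icc.2 ⟨u3, by rw [← ha0c]; exact u4⟩
          · intro hmem
            obtain ⟨c, hc, hcf⟩ := Finset.mem_image.1 hmem
            have hcP := Finset.mem_of_mem_erase hc
            have hcn : c ≠ a0 := Finset.ne_of_mem_erase hc
            exact (hPP.2.2 c hcP a0 ha0 hcn).1 hcf
      · have ha : (a0.1, m+1) = a0 := Prod.ext rfl ha0c.symm
        show insert (a0.1, m+1) (P.erase a0) = P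
        rw [ha, Finset.insert_erase ha0]
  -- compute T.card
  have h3 : T.card = (b (m+1) - k) * rookNum b m k := by
    rw [hT, Finset.card_sigma]
    have : ∀ Q ∈ rookSet b m k,
        (Finset.Icc 1 (b (m+1)) \ Q.image Prod.fst).card = b (m+1) - k := by
      intro Q hQ
      rw [Finset.card_sdiff_of_subset (himg Q hQ), Nat.card_Icc,
        Finset.card_image_of_injOn (fst_injOn (mem_rookSet.1 hQ)), (mem_rookSet.1 hQ).1]
      omega
    rw [Finset.sum_congr rfl this, Finset.sum_const, rookNum_eq_card, smul_eq_mul, mul_comm]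
  rw [rookNum_eq_card, hsplit, h1, ← rookNum_eq_card, ← h2, h3, add_comm]

noncomputable def Rk (b : ℕ → ℕ) (m : ℕ) (j : ℤ) : ℤ :=
  if 0 ≤ j then (rookNum b m j.toNat : ℤ) else 0

lemma Rk_nonneg (b : ℕ → ℕ) (m : ℕ) (j : ℤ) : 0 ≤ Rk b m j := by
  unfold Rk; split <;> positivity

lemma Rk_neg (b : ℕ → ℕ) (m : ℕ) {j : ℤ} (h : j < 0) : Rk b m j = 0 := by
  unfold Rk; rw [if_neg (by omega)]

lemma Rk_nat (b : ℕ → ℕ) (m : ℕ) (k : ℕ) : Rk b m (k : ℤ) = (rookNum b m k : ℤ) := by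
  unfold Rk; rw [if_pos (by positivity), Int.toNat_natCast]

lemma Rk_zero (b : ℕ → ℕ) (m : ℕ) : Rk b m 0 = 1 := by
  have := Rk_nat b m 0; rw [rookNum_zero] at this; simpa using this

lemma Rk_vanish_cols (b : ℕ → ℕ) {m : ℕ} {j : ℤ} (h : (m : ℤ) < j) : Rk b m j = 0 := by
  unfold Rk
  split
  · rw [rookNum_eq_zero_of_cols_lt (by omega), Nat.cast_zero]
  · rfl

lemma Rk_row0 (b : ℕ → ℕ) (j : ℤ) : Rk b 0 j = if j = 0 then 1 else 0 := by
  rcases lt_trichotomy j 0 with h | h | h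
  · rw [Rk_neg b 0 h, if_neg (by omega)]
  · subst h; rw [Rk_zero, if_pos rfl]
  · rw [Rk_vanish_cols b (by exact_mod_cast h), if_neg (by omega)]

lemma Rk_rec (b : ℕ → ℕ) (m : ℕ) (j : ℤ)
    (hmono : ∀ i j, 1 ≤ i → i ≤ j → b i ≤ b j) :
    Rk b (m+1) j = Rk b m j + ((b (m+1) : ℤ) + 1 - j) * Rk b m (j-1) := by
  rcases lt_trichotomy j 0 with h | h | h
  · rw [Rk_neg b _ h, Rk_neg b _ h, Rk_neg b _ (by omega), mul_zero, add_zero]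
  · subst h
    rw [Rk_zero, Rk_zero, Rk_neg b _ (by omega), mul_zero, add_zero]
  · obtain ⟨k, rfl⟩ : ∃ k : ℕ, j = (k : ℤ) + 1 := ⟨(j - 1).toNat, by omega⟩
    have e1 : (k : ℤ) + 1 - 1 = (k : ℤ) := by ring
    rw [show ((k : ℤ) + 1) = ((k + 1 : ℕ) : ℤ) by push_cast; ring] at *
    rw [Rk_nat, Rk_nat, show ((k+1 : ℕ) : ℤ) - 1 = (k : ℤ) by push_cast; ring, Rk_nat]
    rcases le_or_gt k (b (m+1)) with hk | hk
    · rw [rookNum_rec b m k (fun i j h1 h2 _ => hmono i j h1 h2)]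
      push_cast [Nat.cast_sub hk]
      ring
    · have h1 : rookNum b (m+1) (k+1) = 0 :=
        rookNum_eq_zero_of_rows_lt (fun i u1 u2 => hmono i (m+1) u1 u2) (by omega)
      have h2 : rookNum b m (k+1) = 0 := by
        rcases le_or_gt (k+1) m with hle | hlt
        · exact rookNum_eq_zero_of_rows_lt (fun i u1 u2 => hmono i m u1 u2)
            (by have := hmono m (m+1) (by omega) (by omega); omega)
        · exact rookNum_eq_zero_of_cols_lt hlt
      have h3 : rookNum b m k = 0 := by
        rcases le_or_gt k m with hle | hlt
        · have hm1 : 1 ≤ m := by omega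
          exact rookNum_eq_zero_of_rows_lt (fun i u1 u2 => hmono i m u1 u2)
            (by have := hmono m (m+1) (by omega) (by omega); omega)
        · exact rookNum_eq_zero_of_cols_lt hlt
      rw [h1, h2, h3]
      push_cast
      ring

lemma Rk_peel (b : ℕ → ℕ) (hmono : ∀ i j, 1 ≤ i → i ≤ j → b i ≤ b j)
    (hb1 : 1 ≤ b 1) (m : ℕ) (j : ℤ) :
    Rk b (m+1) j = Rk (fun i => b (i+1) - 1) m j
      + ((b 1 : ℤ) + (m+1) - j) * Rk (fun i => b (i+1) - 1) m (j-1) := by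
  set b' : ℕ → ℕ := fun i => b (i+1) - 1 with hb'
  have hmono' : ∀ i j, 1 ≤ i → i ≤ j → b' i ≤ b' j := fun i j h1 h2 =>
    Nat.sub_le_sub_right (hmono (i+1) (j+1) (by omega) (by omega)) 1
  have hbge : ∀ i, 1 ≤ i → 1 ≤ b i := fun i hi => le_trans hb1 (hmono 1 i le_rfl hi)
  induction m generalizing j with
  | zero =>
    rw [Rk_rec b 0 j hmono, Rk_row0, Rk_row0, Rk_row0, Rk_row0]
    push_cast
    ring
  | succ m ih =>
    have hcast : (b' (m+1) : ℤ) = (b (m+2) : ℤ) - 1 := by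
      have := hbge (m+2) (by omega)
      rw [hb']
      push_cast [Nat.cast_sub this]
      ring
    rw [Rk_rec b (m+1) j hmono, ih j, ih (j-1),
      Rk_rec b' m j hmono', Rk_rec b' m (j-1) hmono', hcast]
    push_cast
    ring

lemma rookNum_dropcol (b : ℕ → ℕ) (hb1 : b 1 = 0) (m k : ℕ) :
    rookNum b (m+1) k = rookNum (fun i => b (i+1)) m k := by
  classical
  set γ : ℕ → ℕ := fun i => b (i+1) with hγ
  rw [rookNum_eq_card, rookNum_eq_card]
  refine (Finset.card_bij (fun Q _ => Q.image (fun c => (c.1, c.2 + 1))) ?_ ?_ ?_).symm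
  · intro Q hQ
    obtain ⟨hcard, hbd, hna⟩ := mem_rookSet.1 hQ
    rw [mem_rookSet]
    have hinj : Function.Injective (fun c : ℕ × ℕ => (c.1, c.2 + 1)) := by
      intro c c' h
      simp only [Prod.mk.injEq] at h
      exact Prod.ext h.1 (by omega)
    refine ⟨by rw [Finset.card_image_of_injective _ hinj, hcard], ?_, ?_⟩
    · intro c hc
      obtain ⟨d, hd, rfl⟩ := Finset.mem_image.1 hc
      obtain ⟨u1, u2, u3, u4⟩ := hbd d hd
      exact ⟨by omega, by omega, u3, u4⟩
    · intro c hc c' hc' hne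
      obtain ⟨d, hd, rfl⟩ := Finset.mem_image.1 hc
      obtain ⟨d', hd', rfl⟩ := Finset.mem_image.1 hc'
      have hdd : d ≠ d' := fun h => hne (by rw [h])
      obtain ⟨v1, v2⟩ := hna d hd d' hd' hdd
      exact ⟨v1, by simpa using fun h => v2 (by omega)⟩
  · intro Q hQ Q' hQ' heqq
    have heq : Q.image (fun c => (c.1, c.2 + 1)) = Q'.image (fun c => (c.1, c.2 + 1)) := heqq
    have hinj : Function.Injective (fun c : ℕ × ℕ => (c.1, c.2 + 1)) := by
      intro c c' h
      simp only [Prod.mk.injEq] at h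
      exact Prod.ext h.1 (by omega)
    exact Finset.image_injective hinj heq
  · intro P hP
    obtain ⟨hcard, hbd, hna⟩ := mem_rookSet.1 hP
    have hcol : ∀ c ∈ P, 2 ≤ c.2 := by
      intro c hc
      obtain ⟨u1, u2, u3, u4⟩ := hbd c hc
      by_contra h
      have : c.2 = 1 := by omega
      rw [this, hb1] at u4
      omega
    refine ⟨P.image (fun c => (c.1, c.2 - 1)), ?_, ?_⟩
    · rw [mem_rookSet]
      have hinjOn : Set.InjOn (fun c : ℕ × ℕ => (c.1, c.2 - 1)) (P : Set (ℕ × ℕ)) := by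
        intro c hc c' hc' h
        simp only [Prod.mk.injEq] at h
        have := hcol c hc
        have := hcol c' hc'
        exact Prod.ext h.1 (by omega)
      refine ⟨by rw [Finset.card_image_of_injOn hinjOn, hcard], ?_, ?_⟩
      · intro c hc
        obtain ⟨d, hd, rfl⟩ := Finset.mem_image.1 hc
        obtain ⟨u1, u2, u3, u4⟩ := hbd d hd
        have := hcol d hd
        refine ⟨by omega, by omega, u3, ?_⟩
        show d.1 ≤ γ (d.2 - 1)
        rw [hγ]
        simpa [show d.2 - 1 + 1 = d.2 by omega] using u4
      · intro c hc c' hc' hne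
        obtain ⟨d, hd, rfl⟩ := Finset.mem_image.1 hc
        obtain ⟨d', hd', rfl⟩ := Finset.mem_image.1 hc'
        have hdd : d ≠ d' := fun h => hne (by rw [h])
        obtain ⟨v1, v2⟩ := hna d hd d' hd' hdd
        have := hcol d hd
        have := hcol d' hd'
        exact ⟨v1, by simpa using fun h => v2 (by omega)⟩
    · show (P.image (fun c => (c.1, c.2 - 1))).image (fun c => (c.1, c.2 + 1)) = P
      rw [Finset.image_image]
      rw [show ((fun c : ℕ × ℕ => (c.1, c.2 + 1)) ∘ (fun c : ℕ × ℕ => (c.1, c.2 - 1)))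
        = fun c : ℕ × ℕ => (c.1, c.2 - 1 + 1) from rfl]
      refine Finset.image_congr ?_ |>.trans (Finset.image_id)
      intro c hc
      have := hcol c hc
      show (c.1, c.2 - 1 + 1) = id c
      have h2 : c.2 - 1 + 1 = c.2 := by omega
      rw [h2, id]

lemma Rk_dropcol (b : ℕ → ℕ) (hb1 : b 1 = 0) (m : ℕ) (j : ℤ) :
    Rk b (m+1) j = Rk (fun i => b (i+1)) m j := by
  unfold Rk
  split
  · rw [rookNum_dropcol b hb1]
  · rfl

noncomputable def MB (b : ℕ → ℕ) (m k : ℕ) : ℝ := ((Rk b m ((m : ℤ) - k) : ℤ) : ℝ)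

lemma MB_nonneg (b : ℕ → ℕ) (m k : ℕ) : 0 ≤ MB b m k := by
  unfold MB; exact_mod_cast Rk_nonneg b m _

lemma MB_row0 (b : ℕ → ℕ) (k : ℕ) : MB b 0 k = if k = 0 then 1 else 0 := by
  unfold MB
  rw [Rk_row0]
  by_cases h : k = 0
  · subst h; norm_num
  · have hcond : ¬ (((0:ℕ):ℤ) - (k:ℤ) = 0) := by push_cast; omega
    rw [if_neg hcond, if_neg h, Int.cast_zero]

lemma MB_peel (b : ℕ → ℕ) (hmono : ∀ i j, 1 ≤ i → i ≤ j → b i ≤ b j)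
    (hb1 : 1 ≤ b 1) (m k : ℕ) :
    MB b (m+1) k = (if k = 0 then 0 else MB (fun i => b (i+1) - 1) m (k-1))
      + ((k : ℝ) + (b 1 : ℝ)) * MB (fun i => b (i+1) - 1) m k := by
  unfold MB
  have e0 : ((m+1:ℕ):ℤ) - (k:ℤ) = ((m:ℤ)+1) - k := by push_cast; ring
  rw [e0, Rk_peel b hmono hb1 m (((m:ℤ)+1) - k)]
  have e2 : ((m:ℤ) + 1 - k) - 1 = (m : ℤ) - k := by ring
  have e3 : ((b 1 : ℤ) + (m+1) - ((m:ℤ)+1-k)) = (k : ℤ) + b 1 := by ring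
  rw [e2, e3]
  push_cast
  by_cases h : k = 0
  · subst h
    rw [if_pos rfl]
    rw [show ((m:ℤ)+1) - ((0:ℕ):ℤ) = (m:ℤ)+1 by push_cast; ring,
      Rk_vanish_cols (fun i => b (i+1) - 1) (by omega : (m:ℤ) < (m:ℤ)+1)]
    push_cast
    ring
  · rw [if_neg h]
    have e4 : ((m : ℤ) + 1 - k) = (m : ℤ) - ((k - 1 : ℕ) : ℤ) := by
      have : 1 ≤ k := by omega
      omega
    rw [e4]

lemma MB_dropcol (b : ℕ → ℕ) (hb1 : b 1 = 0) (m k : ℕ) :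
    MB b (m+1) k = if k = 0 then 0 else MB (fun i => b (i+1)) m (k-1) := by
  unfold MB
  rw [Rk_dropcol b hb1 m]
  by_cases h : k = 0
  · subst h
    rw [if_pos rfl, show ((m+1:ℕ):ℤ) - ((0:ℕ):ℤ) = (m:ℤ)+1 by push_cast; ring,
      Rk_vanish_cols (fun i => b (i+1)) (by omega : (m:ℤ) < (m:ℤ)+1),
      Int.cast_zero]
  · rw [if_neg h]
    congr 2
    omega

lemma det_split (p : ℕ) (X Y : Fin p → Fin p → ℝ) :
    Matrix.det (Matrix.of fun i j => X i j + Y i j)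
      = ∑ s : Finset (Fin p),
          Matrix.det (Matrix.of fun i j => if j ∈ s then X i j else Y i j) := by
  classical
  rw [← Matrix.det_transpose (Matrix.of fun i j => X i j + Y i j)]
  have key := (Matrix.detRowAlternating (n := Fin p) (R := ℝ)).toMultilinearMap.map_add_univ
    (fun j i => X i j) (fun j i => Y i j)
  have h2 : ∀ s : Finset (Fin p), (s.piecewise (fun j i => X i j) (fun j i => Y i j))
      = Matrix.transpose (Matrix.of fun i j => if j ∈ s then X i j else Y i j) := by
    intro s
    funext j i
    by_cases h : j ∈ s <;> simp [Finset.piecewise, h]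
  simp only [h2] at key
  have h1 : Matrix.transpose (Matrix.of fun i j => X i j + Y i j)
      = ((fun j i => X i j) + (fun j i => Y i j) : Matrix (Fin p) (Fin p) ℝ) := by
    funext j i
    rfl
  rw [Matrix.det, h1]
  refine key.trans ?_
  refine Finset.sum_congr rfl fun s _ => ?_
  exact Matrix.det_transpose _

lemma main_aux (n : ℕ) : ∀ (b : ℕ → ℕ), (∀ i j, 1 ≤ i → i ≤ j → b i ≤ b j) →
    ∀ (p : ℕ) (r c : Fin p → ℕ), StrictMono r → StrictMono c →
    (∑ i, (r i + 1)) ≤ n →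
    0 ≤ (Matrix.of fun i j => MB b (r i) (c j)).det := by
  induction n with
  | zero =>
    intro b hb p r c hr hc hn
    match p with
    | 0 => simp [Matrix.det_isEmpty]
    | Nat.succ q =>
      exfalso
      have : 0 < ∑ i : Fin q.succ, (r i + 1) :=
        Finset.sum_pos (fun i _ => by omega) ⟨0, Finset.mem_univ 0⟩
      omega
  | succ n IH =>
    intro b hb p r c hr hc hn
    match p with
    | 0 => simp [Matrix.det_isEmpty]
    | Nat.succ q =>
      set A := (Matrix.of fun i j => MB b (r i) (c j)) with hA
      by_cases hr0 : r 0 = 0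
      · -- first row of the minor is the first row of the matrix
        by_cases hc0 : c 0 = 0
        · -- expand along the first row
          have hrow : ∀ j, A 0 j = if j = 0 then 1 else 0 := by
            intro j
            show MB b (r 0) (c j) = _
            rw [hr0, MB_row0]
            by_cases hj : j = 0
            · rw [if_pos hj, if_pos (by rw [hj, hc0])]
            · have : (0 : Fin (q+1)) < j := by
                rcases Fin.eq_zero_or_eq_succ j with rfl | ⟨j', rfl⟩
                · exact absurd rfl hj
                · exact Fin.succ_pos j'
              have : c 0 < c j := hc this
              rw [if_neg (by omega), if_neg hj]
          rw [Matrix.det_succ_row_zero, Fin.sum_univ_succ]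
          have htail : ∀ j : Fin q,
              (-1 : ℝ) ^ ((j.succ : Fin (q+1)) : ℕ) * A 0 j.succ
                * (A.submatrix Fin.succ (Fin.succAbove j.succ)).det = 0 := by
            intro j
            rw [hrow j.succ, if_neg (Fin.succ_ne_zero j), mul_zero, zero_mul]
          rw [Finset.sum_congr rfl (fun j _ => htail j), Finset.sum_const, smul_zero,
            add_zero, hrow 0, if_pos rfl]
          simp only [Fin.val_zero, pow_zero, one_mul, mul_one, Fin.succAbove_zero]
          have hsub : A.submatrix Fin.succ Fin.succ
              = Matrix.of fun (i j : Fin q) => MB b ((r ∘ Fin.succ) i) ((c ∘ Fin.succ) j) := rfl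
          rw [hsub]
          refine IH b hb q (r ∘ Fin.succ) (c ∘ Fin.succ)
            (hr.comp Fin.strictMono_succ) (hc.comp Fin.strictMono_succ) ?_
          have := Fin.sum_univ_succ (fun i => r i + 1)
          rw [this] at hn
          simp only [Function.comp]
          omega
        · -- first row is zero
          refine le_of_eq (Matrix.det_eq_zero_of_row_eq_zero 0 fun j => ?_).symm
          show MB b (r 0) (c j) = 0
          rw [hr0, MB_row0]
          have : c 0 ≤ c j := hc.monotone (Fin.zero_le j)
          rw [if_neg (by omega)]
      · -- all rows are at least 1
        have hri : ∀ i, 1 ≤ r i := by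
          intro i
          have : r 0 ≤ r i := hr.monotone (Fin.zero_le i)
          omega
        have hr' : StrictMono (fun i => r i - 1) := by
          intro i i' h
          show r i - 1 < r i' - 1
          have h1 := hr h
          have := hri i
          omega
        have hsum : (∑ i, ((fun i => r i - 1) i + 1)) ≤ n := by
          show (∑ i : Fin q.succ, ((r i - 1) + 1)) ≤ n
          have h2 : (∑ i : Fin q.succ, ((r i - 1) + 1)) = ∑ i, r i :=
            Finset.sum_congr rfl fun i _ => by have := hri i; omega
          have h3 : (∑ i : Fin q.succ, (r i + 1)) = (∑ i, r i) + q.succ := by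
            rw [Finset.sum_add_distrib, Finset.sum_const, Finset.card_univ, Fintype.card_fin,
              smul_eq_mul, mul_one]
          omega
        by_cases hb1 : b 1 = 0
        · by_cases hc0 : c 0 = 0
          · -- first column is zero
            refine le_of_eq (Matrix.det_eq_zero_of_column_eq_zero 0 fun i => ?_).symm
            show MB b (r i) (c 0) = 0
            rw [show r i = (r i - 1) + 1 by have := hri i; omega,
              MB_dropcol b hb1, if_pos hc0]
          · have hcj : ∀ j, 1 ≤ c j := by
              intro j
              have : c 0 ≤ c j := hc.monotone (Fin.zero_le j)
              omega
            have hA2 : A = Matrix.of fun i j =>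
                MB (fun i => b (i+1)) ((fun i => r i - 1) i) ((fun j => c j - 1) j) := by
              funext i j
              show MB b (r i) (c j) = _
              rw [show r i = (r i - 1) + 1 by have := hri i; omega,
                MB_dropcol b hb1, if_neg (by have := hcj j; omega)]
              exact rfl
            rw [hA2]
            have hcj' : StrictMono (fun j => c j - 1) := by
              intro j j' h
              show c j - 1 < c j' - 1
              have h1 := hc h
              have := hcj j
              omega
            exact IH (fun i => b (i+1)) (fun i j h1 h2 => hb (i+1) (j+1) (by omega) (by omega))
              (q+1) _ _ hr' hcj' hsum
        · -- peel off the first column and row of the board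
          have hb1' : 1 ≤ b 1 := by omega
          set b' : ℕ → ℕ := fun i => b (i+1) - 1 with hb'
          have hb'm : ∀ i j, 1 ≤ i → i ≤ j → b' i ≤ b' j := fun i j h1 h2 =>
            Nat.sub_le_sub_right (hb (i+1) (j+1) (by omega) (by omega)) 1
          have hA2 : A = Matrix.of fun i j =>
              (fun (i j : Fin q.succ) => if c j = 0 then (0:ℝ)
                else MB b' (r i - 1) (c j - 1)) i j
              + (fun (i j : Fin q.succ) =>
                  ((c j : ℝ) + (b 1 : ℝ)) * MB b' (r i - 1) (c j)) i j := by
            funext i j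
            show MB b (r i) (c j) = _
            rw [show r i = (r i - 1) + 1 by have := hri i; omega,
              MB_peel b hb hb1']
            exact rfl
          rw [hA2, det_split]
          refine Finset.sum_nonneg fun s _ => ?_
          by_cases hs : ∃ j0 ∈ s, c j0 = 0
          · obtain ⟨j0, hj0s, hj0⟩ := hs
            refine le_of_eq (Matrix.det_eq_zero_of_column_eq_zero j0 fun i => ?_).symm
            simp only [Matrix.of_apply, if_pos hj0s, if_pos hj0]
          · push_neg at hs
            set d : Fin q.succ → ℕ := fun j => if j ∈ s then c j - 1 else c j with hd
            set w : Fin q.succ → ℝ := fun j => if j ∈ s then 1 else (c j : ℝ) + b 1 with hw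
            have hM : (Matrix.of fun i j =>
                if j ∈ s then
                  (fun (i j : Fin q.succ) => if c j = 0 then (0:ℝ)
                    else MB b' (r i - 1) (c j - 1)) i j
                else (fun (i j : Fin q.succ) =>
                  ((c j : ℝ) + (b 1 : ℝ)) * MB b' (r i - 1) (c j)) i j)
                = Matrix.of fun i j => w j * MB b' (r i - 1) (d j) := by
              funext i j
              by_cases hj : j ∈ s
              · simp only [Matrix.of_apply, if_pos hj, hw, hd,
                  if_neg (hs j hj), one_mul]
              · simp only [Matrix.of_apply, if_neg hj, hw, hd]
            rw [hM, show (Matrix.of fun i j => w j * MB b' (r i - 1) (d j)).det = (∏ j, w j) * (Matrix.of fun i j => MB b' (r i - 1) (d j)).det from Matrix.det_mul_row _ _]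
            refine mul_nonneg (Finset.prod_nonneg fun j _ => ?_) ?_
            · rw [hw]
              by_cases hj : j ∈ s <;> simp [hj] <;> positivity
            · have hdm : Monotone d := by
                intro j j' hle
                rcases eq_or_lt_of_le hle with rfl | hlt
                · exact le_rfl
                · have h1 := hc hlt
                  rw [hd]
                  show (if j ∈ s then c j - 1 else c j) ≤ (if j' ∈ s then c j' - 1 else c j')
                  by_cases hj : j ∈ s <;> by_cases hj' : j' ∈ s <;>
                    simp only [hj, hj', if_true, if_false]
                  · omega
                  · omega
                  · have := hs j' hj'
                    omega
                  · omega
              by_cases hinj : Function.Injective d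
              · exact IH b' hb'm q.succ (fun i => r i - 1) d hr'
                  (hdm.strictMono_of_injective hinj) hsum
              · rw [Function.not_injective_iff] at hinj
                obtain ⟨j1, j2, hj12, hne⟩ := hinj
                refine le_of_eq (Matrix.det_zero_of_column_eq hne fun i => ?_).symm
                show MB b' (r i - 1) (d j1) = MB b' (r i - 1) (d j2)
                rw [hj12]


lemma MB_spec (b : ℕ → ℕ) (m k : ℕ) :
    MB b m k = if k ≤ m then (rookNum b m (m - k) : ℝ) else 0 := by
  unfold MB Rk
  by_cases h : k ≤ m
  · rw [if_pos (by omega : (0:ℤ) ≤ (m:ℤ) - k), if_pos h,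
      show ((m:ℤ) - k).toNat = m - k by omega]
    push_cast
    ring
  · rw [if_neg (by omega : ¬ ((0:ℤ) ≤ (m:ℤ) - k)), if_neg h, Int.cast_zero]

theorem stmt3 (b : ℕ → ℕ) (hpos : ∀ i, 1 ≤ i → 0 < b i)
    (hmono : ∀ i j, 1 ≤ i → i ≤ j → b i ≤ b j) :
    TotallyNonneg (fun m k => if k ≤ m then (rookNum b m (m - k) : ℝ) else 0) := by
  intro p r c hr hc
  have hM : (Matrix.of fun i j =>
      (fun m k => if k ≤ m then (rookNum b m (m - k) : ℝ) else 0) (r i) (c j))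
      = Matrix.of fun i j => MB b (r i) (c j) := by
    funext i j
    show _ = MB b (r i) (c j)
    rw [MB_spec]
    exact rfl
  rw [hM]
  exact main_aux (∑ i, (r i + 1)) b hmono p r c hr hc le_rfl
end

section
/- Let G be a chordal graph on n vertices with perfect elimination order v_1, ..., v_n, and for 1 ≤ m ≤ n let G_m be the subgraph of G induced by v_1, ..., v_m (with G_0 the empty graph). Let S_G be the (n+1)×(n+1) matrix with rows and columns indexed by {0, 1, ..., n} whose (m,k) entry is {G_m brace k}, and let s_G = S_G^{-1}. Then for all 0 ≤ m, k ≤ n, the (m,k) entry of s_G has sign (-1)^{m-k}, i.e., (-1)^{m-k} · s_G(m,k) ≥ 0. -/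
def IsPEO {n : ℕ} (G : SimpleGraph (Fin n)) : Prop :=
  ∀ k i j : Fin n, i < k → j < k → i ≠ j → G.Adj i k → G.Adj j k → G.Adj i j

noncomputable def graphStirlingInduced {n : ℕ} (G : SimpleGraph (Fin n)) (m k : ℕ) : ℕ :=
  Nat.card {P : Finset (Finset (Fin n)) //
    P.card = k ∧
    (∀ B ∈ P, B.Nonempty) ∧
    (∀ B ∈ P, ∀ v ∈ B, (v : ℕ) < m) ∧
    (∀ v : Fin n, (v : ℕ) < m → ∃! B, B ∈ P ∧ v ∈ B) ∧
    ∀ B ∈ P, ∀ u ∈ B, ∀ w ∈ B, ¬ G.Adj u w}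

open Finset
open scoped Classical

namespace Stmt4Aux

variable {n : ℕ} (G : SimpleGraph (Fin n))

def PP (m k : ℕ) (P : Finset (Finset (Fin n))) : Prop :=
  P.card = k ∧
    (∀ B ∈ P, B.Nonempty) ∧
    (∀ B ∈ P, ∀ v ∈ B, (v : ℕ) < m) ∧
    (∀ v : Fin n, (v : ℕ) < m → ∃! B, B ∈ P ∧ v ∈ B) ∧
    ∀ B ∈ P, ∀ u ∈ B, ∀ w ∈ B, ¬ G.Adj u w

lemma gsi_eq (m k : ℕ) : graphStirlingInduced G m k = Nat.card {P // PP G m k P} := rfl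

/-- number of earlier neighbours of vertex `j` -/
noncomputable def dd (j : ℕ) : ℕ :=
  if h : j < n then (univ.filter fun u : Fin n => G.Adj u ⟨j, h⟩ ∧ (u : ℕ) < j).card else 0

variable {G}

lemma block_unique {m k : ℕ} {P : Finset (Finset (Fin n))} (h : PP G m k P)
    {B C : Finset (Fin n)} {v : Fin n} (hB : B ∈ P) (hvB : v ∈ B) (hC : C ∈ P) (hvC : v ∈ C) :
    B = C :=
  (h.2.2.2.1 v (h.2.2.1 B hB v hvB)).unique ⟨hB, hvB⟩ ⟨hC, hvC⟩

lemma forb_card (hG : IsPEO G) {j m k : ℕ} (hj : j < n) (hjm : j ≤ m) (hmj : m ≤ j + 1)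
    {Q : Finset (Finset (Fin n))} (hQ : PP G m k Q) :
    (Q.filter fun B => ∃ u ∈ B, G.Adj u ⟨j, hj⟩).card = dd G j := by
  rw [dd, dif_pos hj]
  symm
  refine Finset.card_bij
    (fun u hu => Q.choose (fun B => u ∈ B)
      (hQ.2.2.2.1 u (lt_of_lt_of_le (mem_filter.mp hu).2.2 hjm))) ?_ ?_ ?_
  · intro u hu
    rw [mem_filter]
    refine ⟨Finset.choose_mem _ _ _, u, Finset.choose_property (fun B => u ∈ B) Q _,
      (mem_filter.mp hu).2.1⟩
  · intro u1 hu1 u2 hu2 heq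
    by_contra hne
    obtain ⟨-, ha1, hl1⟩ := mem_filter.mp hu1
    obtain ⟨-, ha2, hl2⟩ := mem_filter.mp hu2
    have hadj : G.Adj u1 u2 := hG ⟨j, hj⟩ u1 u2 (by simpa [Fin.lt_def] using hl1)
      (by simpa [Fin.lt_def] using hl2) hne ha1 ha2
    have hp1 : ∃! B, B ∈ Q ∧ u1 ∈ B := hQ.2.2.2.1 u1 (lt_of_lt_of_le hl1 hjm)
    have hp2 : ∃! B, B ∈ Q ∧ u2 ∈ B := hQ.2.2.2.1 u2 (lt_of_lt_of_le hl2 hjm)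
    have heq' : Q.choose (fun B => u1 ∈ B) hp1 = Q.choose (fun B => u2 ∈ B) hp2 := heq
    refine hQ.2.2.2.2 _ (Finset.choose_mem _ Q hp1)
      u1 (Finset.choose_property (fun B => u1 ∈ B) Q hp1)
      u2 ?_ hadj
    rw [heq']
    exact Finset.choose_property (fun B => u2 ∈ B) Q hp2
  · intro C hC
    obtain ⟨hCQ, u, huC, hadj⟩ := mem_filter.mp hC
    have hum : (u : ℕ) < m := hQ.2.2.1 C hCQ u huC
    have hune : u ≠ ⟨j, hj⟩ := G.ne_of_adj hadj
    have hult : (u : ℕ) < j := by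
      have : (u : ℕ) ≠ j := fun h => hune (Fin.ext h)
      omega
    refine ⟨u, mem_filter.mpr ⟨mem_univ u, hadj, hult⟩, ?_⟩
    exact block_unique hQ (Finset.choose_mem _ _ _)
      (Finset.choose_property (fun B => u ∈ B) Q _) hCQ huC

lemma dd_le_of_pp (hG : IsPEO G) {j m k : ℕ} (hj : j < n) (hjm : j ≤ m) (hmj : m ≤ j + 1)
    {Q : Finset (Finset (Fin n))} (hQ : PP G m k Q) : dd G j ≤ k := by
  rw [← forb_card hG hj hjm hmj hQ, ← hQ.1]
  exact Finset.card_filter_le _ _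

lemma st_vanish (hG : IsPEO G) {j m k : ℕ} (hj : j < n) (hjm : j ≤ m) (hmj : m ≤ j + 1)
    (hk : k < dd G j) : graphStirlingInduced G m k = 0 := by
  rw [gsi_eq, Nat.card_eq_zero]
  left
  constructor
  rintro ⟨Q, hQ⟩
  exact absurd (dd_le_of_pp hG hj hjm hmj hQ) (by omega)

lemma st_m_zero (h0 : 0 < n) {m : ℕ} (hm : 0 < m) : graphStirlingInduced G m 0 = 0 := by
  rw [gsi_eq, Nat.card_eq_zero]
  left
  constructor
  rintro ⟨P, h1, h2, h3, h4, h5⟩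
  obtain ⟨B, ⟨hBP, -⟩, -⟩ := h4 ⟨0, h0⟩ hm
  simp [Finset.card_eq_zero.mp h1] at hBP

lemma st_zero (k : ℕ) : graphStirlingInduced G 0 k = if k = 0 then 1 else 0 := by
  rw [gsi_eq]
  split
  · subst ‹k = 0›
    have : Unique {P // PP G 0 0 P} := by
      refine ⟨⟨⟨∅, ?_, ?_, ?_, ?_, ?_⟩⟩, ?_⟩
      · exact Finset.card_empty
      · simp
      · simp
      · exact fun v hv => absurd hv (Nat.not_lt_zero _)
      · simp
      · rintro ⟨P, hP⟩
        exact Subtype.ext (Finset.card_eq_zero.mp hP.1)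
    exact Nat.card_unique
  · rw [Nat.card_eq_zero]
    left
    constructor
    rintro ⟨P, h1, h2, h3, h4, h5⟩
    have hpos : 0 < P.card := by omega
    obtain ⟨B, hB⟩ := Finset.card_pos.mp hpos
    obtain ⟨v, hv⟩ := h2 B hB
    exact absurd (h3 B hB v hv) (Nat.not_lt_zero _)

lemma dd_le_self (j : ℕ) : dd G j ≤ j := by
  rw [dd]
  split
  · refine le_trans (Finset.card_le_card_of_injOn (fun u => (u : ℕ))
      (fun u hu => ?_) (fun a _ b _ h => Fin.ext h)) (le_of_eq (Finset.card_range j))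
    · simp only [Finset.mem_coe, Finset.mem_filter] at hu
      exact Finset.mem_range.mpr hu.2.2
  · exact Nat.zero_le _

end Stmt4Aux
namespace Stmt4Aux

variable {n : ℕ} {G : SimpleGraph (Fin n)}

open Finset

lemma allowed_card (hG : IsPEO G) {j k : ℕ} (hj : j < n) {Q : Finset (Finset (Fin n))}
    (hQ : PP G j k Q) :
    (Q.filter fun B => ∀ u ∈ B, ¬ G.Adj u ⟨j, hj⟩).card = k - dd G j := by
  have h1 : (Q.filter fun B => ∃ u ∈ B, G.Adj u ⟨j, hj⟩).card = dd G j :=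
    forb_card hG hj le_rfl (by omega) hQ
  have h2 : Q.filter (fun B => ∀ u ∈ B, ¬ G.Adj u ⟨j, hj⟩)
      = Q \ Q.filter (fun B => ∃ u ∈ B, G.Adj u ⟨j, hj⟩) := by
    rw [← Finset.filter_not]
    exact Finset.filter_congr (fun B _ => by push_neg; rfl)
  rw [h2, Finset.card_sdiff_of_subset (Finset.filter_subset _ _), h1, hQ.1]

lemma split_card {α : Type*} [Finite α] (p q : α → Prop) :
    Nat.card {x // p x} = Nat.card {x // p x ∧ q x} + Nat.card {x // p x ∧ ¬ q x} := by
  classical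
  have e : {x // p x ∧ q x} ⊕ {x // p x ∧ ¬ q x} ≃ {x // p x} := by
    refine ⟨Sum.elim (fun a => ⟨a.1, a.2.1⟩) (fun a => ⟨a.1, a.2.1⟩),
      fun x => if h : q x.1 then Sum.inl ⟨x.1, x.2, h⟩ else Sum.inr ⟨x.1, x.2, h⟩, ?_, ?_⟩
    · rintro (⟨x, hx, hq⟩ | ⟨x, hx, hq⟩) <;> simp [hq]
    · rintro ⟨x, hx⟩
      by_cases h : q x <;> simp [h]
  rw [← Nat.card_congr e, Nat.card_sum]

section CardA

lemma ppA_erase {j k' : ℕ} (hj : j < n) {P : Finset (Finset (Fin n))}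
    (hP : PP G (j+1) (k'+1) P) (hm : ({(⟨j, hj⟩ : Fin n)} : Finset (Fin n)) ∈ P) :
    PP G j k' (P.erase {⟨j, hj⟩}) := by
  obtain ⟨hc, hne, hbd, hcov, hind⟩ := hP
  have hvmv : ((⟨j, hj⟩ : Fin n) : ℕ) = j := rfl
  refine ⟨?_, ?_, ?_, ?_, ?_⟩
  · rw [Finset.card_erase_of_mem hm, hc]
    omega
  · exact fun B hB => hne B (Finset.mem_of_mem_erase hB)
  · intro B hB v hv
    have hBP := Finset.mem_of_mem_erase hB
    have h1 : (v : ℕ) < j + 1 := hbd B hBP v hv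
    have h2 : v ≠ ⟨j, hj⟩ := by
      intro h
      subst h
      exact (Finset.ne_of_mem_erase hB)
        (block_unique ⟨hc, hne, hbd, hcov, hind⟩ hBP hv hm (Finset.mem_singleton_self _))
    have : (v : ℕ) ≠ j := fun h => h2 (Fin.ext h)
    omega
  · intro v hv
    obtain ⟨B, ⟨hBP, hvB⟩, huniq⟩ := hcov v (by omega)
    have hBne : B ≠ {⟨j, hj⟩} := by
      intro h
      subst h
      have : v = ⟨j, hj⟩ := Finset.mem_singleton.mp hvB
      subst this
      omega
    exact ⟨B, ⟨Finset.mem_erase.mpr ⟨hBne, hBP⟩, hvB⟩,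
      fun C hC => huniq C ⟨Finset.mem_of_mem_erase hC.1, hC.2⟩⟩
  · exact fun B hB => hind B (Finset.mem_of_mem_erase hB)

lemma ppA_insert {j k' : ℕ} (hj : j < n) {Q : Finset (Finset (Fin n))}
    (hQ : PP G j k' Q) :
    ({(⟨j, hj⟩ : Fin n)} : Finset (Fin n)) ∉ Q ∧
      PP G (j+1) (k'+1) (insert {⟨j, hj⟩} Q) := by
  obtain ⟨hc, hne, hbd, hcov, hind⟩ := hQ
  have hvmv : ((⟨j, hj⟩ : Fin n) : ℕ) = j := rfl
  have hnotin : ({(⟨j, hj⟩ : Fin n)} : Finset (Fin n)) ∉ Q := by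
    intro h
    have := hbd _ h _ (Finset.mem_singleton_self _)
    simp at this
  refine ⟨hnotin, ?_, ?_, ?_, ?_, ?_⟩
  · rw [Finset.card_insert_of_notMem hnotin, hc]
  · intro B hB
    rcases Finset.mem_insert.mp hB with h | h
    · exact h ▸ ⟨_, Finset.mem_singleton_self _⟩
    · exact hne B h
  · intro B hB v hv
    rcases Finset.mem_insert.mp hB with h | h
    · subst h
      rw [Finset.mem_singleton] at hv
      subst hv
      omega
    · have := hbd B h v hv
      omega
  · intro v hv
    by_cases hvj : (v : ℕ) = j
    · have hv' : v = ⟨j, hj⟩ := Fin.ext hvj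
      subst hv'
      refine ⟨({(⟨j, hj⟩ : Fin n)} : Finset (Fin n)),
        ⟨Finset.mem_insert_self _ _, Finset.mem_singleton_self _⟩, ?_⟩
      rintro C ⟨hCmem, hvC⟩
      rcases Finset.mem_insert.mp hCmem with h | h
      · exact h
      · have := hbd C h _ hvC
        omega
    · obtain ⟨B, ⟨hBP, hvB⟩, huniq⟩ := hcov v (by omega)
      refine ⟨B, ⟨Finset.mem_insert_of_mem hBP, hvB⟩, ?_⟩
      rintro C ⟨hCmem, hvC⟩
      rcases Finset.mem_insert.mp hCmem with h | h
      · subst h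
        rw [Finset.mem_singleton] at hvC
        subst hvC
        simp at hvj
      · exact huniq C ⟨h, hvC⟩
  · intro B hB u hu w hw
    rcases Finset.mem_insert.mp hB with h | h
    · subst h
      rw [Finset.mem_singleton] at hu hw
      subst hu; subst hw
      exact G.irrefl
    · exact hind B h u hu w hw

lemma cardA {j : ℕ} (hj : j < n) (k' : ℕ) :
    Nat.card {P // PP G (j+1) (k'+1) P ∧ ({(⟨j, hj⟩ : Fin n)} : Finset (Fin n)) ∈ P}
      = graphStirlingInduced G j k' := by
  rw [gsi_eq]
  refine Nat.card_congr ⟨fun x => ⟨x.1.erase {⟨j, hj⟩}, ppA_erase hj x.2.1 x.2.2⟩,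
    fun x => ⟨insert {⟨j, hj⟩} x.1, (ppA_insert hj x.2).2, Finset.mem_insert_self _ _⟩,
    ?_, ?_⟩
  · rintro ⟨P, hP, hm⟩
    exact Subtype.ext (Finset.insert_erase hm)
  · rintro ⟨Q, hQ⟩
    exact Subtype.ext (Finset.erase_insert (ppA_insert hj hQ).1)

end CardA

end Stmt4Aux
namespace Stmt4Aux

variable {n : ℕ} {G : SimpleGraph (Fin n)}

open Finset

section CardB

lemma exists_ne_of_ne_singleton {B : Finset (Fin n)} {v : Fin n} (hv : v ∈ B) (hne : B ≠ {v}) :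
    ∃ x ∈ B, x ≠ v := by
  by_contra hcon
  push_neg at hcon
  exact hne (Finset.eq_singleton_iff_unique_mem.mpr ⟨hv, fun x hx => hcon x hx⟩)

/-- the block of the new vertex `j` in a partition counted by `St (j+1) k`. -/
noncomputable def fwd {j k : ℕ} (hj : j < n) (P : Finset (Finset (Fin n)))
    (hP : PP G (j+1) k P) : Finset (Fin n) :=
  P.choose (fun B => (⟨j, hj⟩ : Fin n) ∈ B) (hP.2.2.2.1 ⟨j, hj⟩ (Nat.lt_succ_self j))

lemma fwd_mem {j k : ℕ} (hj : j < n) (P : Finset (Finset (Fin n))) (hP : PP G (j+1) k P) :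
    fwd hj P hP ∈ P :=
  Finset.choose_mem (fun B => (⟨j, hj⟩ : Fin n) ∈ B) P
    (hP.2.2.2.1 ⟨j, hj⟩ (Nat.lt_succ_self j))

lemma fwd_self {j k : ℕ} (hj : j < n) (P : Finset (Finset (Fin n))) (hP : PP G (j+1) k P) :
    (⟨j, hj⟩ : Fin n) ∈ fwd hj P hP :=
  Finset.choose_property (fun B => (⟨j, hj⟩ : Fin n) ∈ B) P
    (hP.2.2.2.1 ⟨j, hj⟩ (Nat.lt_succ_self j))

lemma ppB_forward {j k : ℕ} (hj : j < n) {P : Finset (Finset (Fin n))} {B0 : Finset (Fin n)}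
    (hP : PP G (j+1) k P) (hnot : ({(⟨j, hj⟩ : Fin n)} : Finset (Fin n)) ∉ P)
    (hB0 : B0 ∈ P) (hvm : (⟨j, hj⟩ : Fin n) ∈ B0) :
    PP G j k (insert (B0.erase ⟨j, hj⟩) (P.erase B0)) ∧
      (∀ u ∈ B0.erase ⟨j, hj⟩, ¬ G.Adj u ⟨j, hj⟩) ∧
      B0.erase ⟨j, hj⟩ ∉ P.erase B0 := by
  have hvmv : ((⟨j, hj⟩ : Fin n) : ℕ) = j := rfl
  obtain ⟨hc, hne, hbd, hcov, hind⟩ := hP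
  have hPP : PP G (j+1) k P := ⟨hc, hne, hbd, hcov, hind⟩
  have hB0ne : B0 ≠ {⟨j, hj⟩} := fun h => hnot (h ▸ hB0)
  obtain ⟨x, hxB0, hxne⟩ := exists_ne_of_ne_singleton hvm hB0ne
  have hxB' : x ∈ B0.erase ⟨j, hj⟩ := Finset.mem_erase.mpr ⟨hxne, hxB0⟩
  have hnotmem : B0.erase ⟨j, hj⟩ ∉ P.erase B0 := by
    intro hmem
    exact (Finset.ne_of_mem_erase hmem)
      (block_unique hPP (Finset.mem_of_mem_erase hmem) hxB' hB0 hxB0)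
  have hboundC : ∀ C ∈ P.erase B0, ∀ v ∈ C, (v : ℕ) < j := by
    intro C hC v hv
    have h1 : (v : ℕ) < j + 1 := hbd C (Finset.mem_of_mem_erase hC) v hv
    have h2 : (v : ℕ) ≠ j := by
      intro h
      have hveq : v = ⟨j, hj⟩ := Fin.ext h
      subst hveq
      exact (Finset.ne_of_mem_erase hC)
        (block_unique hPP (Finset.mem_of_mem_erase hC) hv hB0 hvm)
    omega
  have hallow : ∀ u ∈ B0.erase ⟨j, hj⟩, ¬ G.Adj u ⟨j, hj⟩ := by
    intro u hu
    exact hind B0 hB0 u (Finset.mem_of_mem_erase hu) _ hvm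
  refine ⟨⟨?_, ?_, ?_, ?_, ?_⟩, hallow, hnotmem⟩
  · rw [Finset.card_insert_of_notMem hnotmem, Finset.card_erase_of_mem hB0, hc]
    have : 0 < P.card := Finset.card_pos.mpr ⟨B0, hB0⟩
    omega
  · intro B hB
    rcases Finset.mem_insert.mp hB with h | h
    · exact h ▸ ⟨x, hxB'⟩
    · exact hne B (Finset.mem_of_mem_erase h)
  · intro B hB v hv
    rcases Finset.mem_insert.mp hB with h | h
    · subst h
      obtain ⟨hvne, hvB0⟩ := Finset.mem_erase.mp hv
      have := hbd B0 hB0 v hvB0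
      have : (v : ℕ) ≠ j := fun hh => hvne (Fin.ext hh)
      omega
    · exact hboundC B h v hv
  · intro v hv
    obtain ⟨B, ⟨hBP, hvB⟩, huniq⟩ := hcov v (by omega)
    have hvne : v ≠ ⟨j, hj⟩ := by
      intro h
      rw [h] at hv
      omega
    by_cases hBB0 : B = B0
    · refine ⟨B0.erase ⟨j, hj⟩, ⟨Finset.mem_insert_self _ _,
        Finset.mem_erase.mpr ⟨hvne, hBB0 ▸ hvB⟩⟩, ?_⟩
      rintro C ⟨hCmem, hvC⟩
      rcases Finset.mem_insert.mp hCmem with h | h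
      · exact h
      · have hCB : C = B := huniq C ⟨Finset.mem_of_mem_erase h, hvC⟩
        rw [hCB, hBB0] at h
        exact absurd rfl (Finset.ne_of_mem_erase h)
    · refine ⟨B, ⟨Finset.mem_insert_of_mem (Finset.mem_erase.mpr ⟨hBB0, hBP⟩), hvB⟩, ?_⟩
      rintro C ⟨hCmem, hvC⟩
      rcases Finset.mem_insert.mp hCmem with h | h
      · subst h
        exact absurd (huniq B0 ⟨hB0, Finset.mem_of_mem_erase hvC⟩) (fun hh => hBB0 hh.symm)
      · exact huniq C ⟨Finset.mem_of_mem_erase h, hvC⟩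
  · intro B hB u hu w hw
    rcases Finset.mem_insert.mp hB with h | h
    · subst h
      exact hind B0 hB0 u (Finset.mem_of_mem_erase hu) w (Finset.mem_of_mem_erase hw)
    · exact hind B (Finset.mem_of_mem_erase h) u hu w hw

lemma ppB_backward {j k : ℕ} (hj : j < n) {Q : Finset (Finset (Fin n))} {B : Finset (Fin n)}
    (hQ : PP G j k Q) (hB : B ∈ Q) (hall : ∀ u ∈ B, ¬ G.Adj u ⟨j, hj⟩) :
    PP G (j+1) k (insert (insert ⟨j, hj⟩ B) (Q.erase B)) ∧
      ({(⟨j, hj⟩ : Fin n)} : Finset (Fin n)) ∉ insert (insert ⟨j, hj⟩ B) (Q.erase B) ∧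
      insert ⟨j, hj⟩ B ∉ Q.erase B ∧ (⟨j, hj⟩ : Fin n) ∉ B := by
  have hvmv : ((⟨j, hj⟩ : Fin n) : ℕ) = j := rfl
  obtain ⟨hc, hne, hbd, hcov, hind⟩ := hQ
  have hQQ : PP G j k Q := ⟨hc, hne, hbd, hcov, hind⟩
  have hvmB : (⟨j, hj⟩ : Fin n) ∉ B := fun h => by have := hbd B hB _ h; omega
  have hg2 : insert ⟨j, hj⟩ B ∉ Q.erase B := by
    intro h
    have := hbd _ (Finset.mem_of_mem_erase h) _ (Finset.mem_insert_self _ _)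
    omega
  have hpp : PP G (j+1) k (insert (insert ⟨j, hj⟩ B) (Q.erase B)) := by
    refine ⟨?_, ?_, ?_, ?_, ?_⟩
    · rw [Finset.card_insert_of_notMem hg2, Finset.card_erase_of_mem hB, hc]
      have : 0 < Q.card := Finset.card_pos.mpr ⟨B, hB⟩
      omega
    · intro C hC
      rcases Finset.mem_insert.mp hC with h | h
      · exact h ▸ ⟨_, Finset.mem_insert_self _ _⟩
      · exact hne C (Finset.mem_of_mem_erase h)
    · intro C hC v hv
      rcases Finset.mem_insert.mp hC with h | h
      · subst h
        rcases Finset.mem_insert.mp hv with h' | h'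
        · subst h'; omega
        · have := hbd B hB v h'; omega
      · have := hbd C (Finset.mem_of_mem_erase h) v hv; omega
    · intro v hv
      by_cases hvj : (v : ℕ) = j
      · have hveq : v = ⟨j, hj⟩ := Fin.ext hvj
        subst hveq
        refine ⟨insert ⟨j, hj⟩ B, ⟨Finset.mem_insert_self _ _, Finset.mem_insert_self _ _⟩, ?_⟩
        rintro C ⟨hCmem, hvC⟩
        rcases Finset.mem_insert.mp hCmem with h | h
        · exact h
        · have := hbd C (Finset.mem_of_mem_erase h) _ hvC; omega
      · obtain ⟨C, ⟨hCQ, hvC⟩, huniq⟩ := hcov v (by omega)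
        have hvne : v ≠ ⟨j, hj⟩ := fun h => hvj (by rw [h])
        by_cases hCB : C = B
        · refine ⟨insert ⟨j, hj⟩ B, ⟨Finset.mem_insert_self _ _,
            Finset.mem_insert_of_mem (hCB ▸ hvC)⟩, ?_⟩
          rintro D ⟨hDmem, hvD⟩
          rcases Finset.mem_insert.mp hDmem with h | h
          · exact h
          · exact absurd ((huniq D ⟨Finset.mem_of_mem_erase h, hvD⟩).trans hCB)
              (Finset.ne_of_mem_erase h)
        · refine ⟨C, ⟨Finset.mem_insert_of_mem (Finset.mem_erase.mpr ⟨hCB, hCQ⟩), hvC⟩, ?_⟩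
          rintro D ⟨hDmem, hvD⟩
          rcases Finset.mem_insert.mp hDmem with h | h
          · subst h
            rcases Finset.mem_insert.mp hvD with h' | h'
            · exact absurd h' hvne
            · exact absurd (huniq B ⟨hB, h'⟩).symm hCB
          · exact huniq D ⟨Finset.mem_of_mem_erase h, hvD⟩
    · intro C hC u hu w hw
      rcases Finset.mem_insert.mp hC with h | h
      · subst h
        rcases Finset.mem_insert.mp hu with h1 | h1 <;> rcases Finset.mem_insert.mp hw with h2 | h2
        · subst h1; subst h2; exact G.irrefl
        · subst h1; exact fun hadj => hall w h2 hadj.symm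
        · subst h2; exact hall u h1
        · exact hind B hB u h1 w h2
      · exact hind C (Finset.mem_of_mem_erase h) u hu w hw
  refine ⟨hpp, ?_, hg2, hvmB⟩
  · intro h
    rcases Finset.mem_insert.mp h with h' | h'
    · obtain ⟨y, hy⟩ := hne B hB
      have : y ∈ ({(⟨j, hj⟩ : Fin n)} : Finset (Fin n)) := h' ▸ Finset.mem_insert_of_mem hy
      rw [Finset.mem_singleton] at this
      subst this
      exact hvmB hy
    · have := hbd _ (Finset.mem_of_mem_erase h') _ (Finset.mem_singleton_self _)
      omega

lemma recon {j k : ℕ} (hj : j < n) {P : Finset (Finset (Fin n))}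
    (hP : PP G (j+1) k P) (hnot : ({(⟨j, hj⟩ : Fin n)} : Finset (Fin n)) ∉ P) :
    insert (insert ⟨j, hj⟩ ((fwd hj P hP).erase ⟨j, hj⟩))
      ((insert ((fwd hj P hP).erase ⟨j, hj⟩) (P.erase (fwd hj P hP))).erase
        ((fwd hj P hP).erase ⟨j, hj⟩)) = P := by
  rw [Finset.insert_erase (fwd_self hj P hP),
    Finset.erase_insert (ppB_forward hj hP hnot (fwd_mem hj P hP) (fwd_self hj P hP)).2.2,
    Finset.insert_erase (fwd_mem hj P hP)]

lemma cardB {j : ℕ} (hG : IsPEO G) (hj : j < n) (k : ℕ) :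
    Nat.card {P // PP G (j+1) k P ∧ ({(⟨j, hj⟩ : Fin n)} : Finset (Fin n)) ∉ P}
      = (k - dd G j) * graphStirlingInduced G j k := by
  classical
  have e : {P // PP G (j+1) k P ∧ ({(⟨j, hj⟩ : Fin n)} : Finset (Fin n)) ∉ P} ≃
      {p : Finset (Finset (Fin n)) × Finset (Fin n) //
        PP G j k p.1 ∧ p.2 ∈ p.1 ∧ ∀ u ∈ p.2, ¬ G.Adj u ⟨j, hj⟩} := by
    refine Equiv.ofBijective
      (fun x => ⟨(insert ((fwd hj x.1 x.2.1).erase ⟨j, hj⟩) (x.1.erase (fwd hj x.1 x.2.1)),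
          (fwd hj x.1 x.2.1).erase ⟨j, hj⟩),
        (ppB_forward hj x.2.1 x.2.2 (fwd_mem hj x.1 x.2.1) (fwd_self hj x.1 x.2.1)).1,
        Finset.mem_insert_self _ _,
        (ppB_forward hj x.2.1 x.2.2 (fwd_mem hj x.1 x.2.1) (fwd_self hj x.1 x.2.1)).2.1⟩)
      ⟨?_, ?_⟩
    · intro x1 x2 heq
      have hval := congrArg Subtype.val heq
      simp only [Prod.mk.injEq] at hval
      apply Subtype.ext
      rw [← recon hj x1.2.1 x1.2.2, ← recon hj x2.2.1 x2.2.2, hval.1, hval.2]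
    · rintro ⟨⟨Q, B⟩, hQ, hB, hall⟩
      obtain ⟨hpp, hnotP, hg2, hvmB⟩ := ppB_backward hj hQ hB hall
      refine ⟨⟨insert (insert ⟨j, hj⟩ B) (Q.erase B), hpp, hnotP⟩, ?_⟩
      have hB0 : fwd hj (insert (insert ⟨j, hj⟩ B) (Q.erase B)) hpp = insert ⟨j, hj⟩ B :=
        block_unique hpp (fwd_mem hj _ hpp) (fwd_self hj _ hpp)
          (Finset.mem_insert_self _ _) (Finset.mem_insert_self _ _)
      apply Subtype.ext
      simp only [hB0, Finset.erase_insert hvmB, Finset.erase_insert hg2,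
        Finset.insert_erase hB, Prod.mk.injEq]
      try exact ⟨rfl, rfl⟩
  rw [Nat.card_congr e]
  have e2 : {p : Finset (Finset (Fin n)) × Finset (Fin n) //
        PP G j k p.1 ∧ p.2 ∈ p.1 ∧ ∀ u ∈ p.2, ¬ G.Adj u ⟨j, hj⟩} ≃
      Σ Q : {Q // PP G j k Q}, {B // B ∈ Q.1 ∧ ∀ u ∈ B, ¬ G.Adj u ⟨j, hj⟩} :=
    { toFun := fun x => ⟨⟨x.1.1, x.2.1⟩, ⟨x.1.2, x.2.2.1, x.2.2.2⟩⟩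
      invFun := fun x => ⟨(x.1.1, x.2.1), x.1.2, x.2.2.1, x.2.2.2⟩
      left_inv := fun x => rfl
      right_inv := fun x => rfl }
  rw [Nat.card_congr e2, Nat.card_eq_fintype_card, Fintype.card_sigma]
  have hfib : ∀ Q : {Q // PP G j k Q},
      Fintype.card {B // B ∈ Q.1 ∧ ∀ u ∈ B, ¬ G.Adj u ⟨j, hj⟩} = k - dd G j := by
    intro Q
    rw [Fintype.card_congr (Equiv.subtypeEquivRight
      (q := fun B => B ∈ Q.1.filter (fun B => ∀ u ∈ B, ¬ G.Adj u ⟨j, hj⟩))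
      (fun B => by simp [Finset.mem_filter]))]
    rw [Fintype.card_coe]
    exact allowed_card hG hj Q.2
  rw [Finset.sum_congr rfl (fun Q _ => hfib Q), Finset.sum_const, smul_eq_mul,
    Finset.card_univ, ← Nat.card_eq_fintype_card, ← gsi_eq]
  ring

end CardB

lemma st_rec {j : ℕ} (hG : IsPEO G) (hj : j < n) (k : ℕ) (hk : dd G j ≤ k) :
    graphStirlingInduced G (j+1) k =
      (if k = 0 then 0 else graphStirlingInduced G j (k-1))
        + (k - dd G j) * graphStirlingInduced G j k := by
  rcases k with _ | k'
  · rw [if_pos rfl, st_m_zero (by omega) (by omega)]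
    have hdd : dd G j = 0 := by omega
    rw [hdd]
    simp
  · rw [if_neg (by omega)]
    rw [gsi_eq, split_card (PP G (j+1) (k'+1))
      (fun P => ({(⟨j, hj⟩ : Fin n)} : Finset (Fin n)) ∈ P)]
    rw [cardA hj k', cardB hG hj (k'+1)]
    congr 1

lemma st_rec_real {j : ℕ} (hG : IsPEO G) (hj : j < n) (k : ℕ) :
    ((graphStirlingInduced G (j+1) k : ℝ)) =
      (if k = 0 then (0:ℝ) else (graphStirlingInduced G j (k-1) : ℝ))
        + ((k : ℝ) - (dd G j : ℝ)) * (graphStirlingInduced G j k : ℝ) := by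
  by_cases hk : dd G j ≤ k
  · rw [st_rec hG hj k hk]
    split_ifs with h
    · subst h
      push_cast [Nat.cast_sub hk]
      ring
    · push_cast [Nat.cast_sub hk]
      ring
  · push_neg at hk
    rw [st_vanish hG hj (by omega) (by omega) hk]
    rw [st_vanish hG hj le_rfl (by omega) hk]
    split_ifs with h
    · simp
    · rw [st_vanish hG hj le_rfl (by omega) (by omega : k - 1 < dd G j)]
      simp

end Stmt4Aux
namespace Stmt4Aux

variable {n : ℕ}

open Finset

noncomputable def TT (G : SimpleGraph (Fin n)) : ℕ → ℕ → ℝ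
  | 0, k => if k = 0 then 1 else 0
  | (m+1), k => (if k = 0 then 0 else TT G m (k-1)) - ((m : ℝ) - (dd G k : ℝ)) * TT G m k

variable {G : SimpleGraph (Fin n)}

lemma TT_zero (k : ℕ) : TT G 0 k = if k = 0 then 1 else 0 := rfl

lemma TT_succ (m k : ℕ) :
    TT G (m+1) k = (if k = 0 then 0 else TT G m (k-1)) - ((m : ℝ) - (dd G k : ℝ)) * TT G m k :=
  rfl

lemma TT_high : ∀ m k, m < k → TT G m k = 0 := by
  intro m
  induction m with
  | zero =>
    intro k hk
    rw [TT_zero, if_neg (by omega)]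
  | succ m ih =>
    intro k hk
    rw [TT_succ, ih k (by omega), if_neg (by omega), ih (k-1) (by omega)]
    ring

lemma TT_sign : ∀ m k, 0 ≤ (-1 : ℝ) ^ (m + k) * TT G m k := by
  intro m
  induction m with
  | zero =>
    intro k
    rw [TT_zero]
    rcases Nat.eq_zero_or_pos k with h | h
    · subst h; norm_num
    · rw [if_neg (by omega)]; simp
  | succ m ih =>
    intro k
    rw [TT_succ]
    have e1 : (-1 : ℝ) ^ (m + 1 + k) = -(-1 : ℝ) ^ (m + k) := by
      rw [show m + 1 + k = (m + k) + 1 by ring, pow_succ]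
      ring
    have hc : TT G m k = 0 ∨ (0 : ℝ) ≤ (m : ℝ) - (dd G k : ℝ) := by
      by_cases hkm : k ≤ m
      · right
        have h1 : dd G k ≤ k := dd_le_self k
        have : dd G k ≤ m := le_trans h1 hkm
        have := (Nat.cast_le (α := ℝ)).mpr this
        linarith
      · exact Or.inl (TT_high m k (by omega))
    rcases k with _ | k'
    · rw [if_pos rfl]
      rcases hc with h | h
      · rw [h]; ring_nf; simp
      · have h2 := ih 0
        rw [e1]
        nlinarith [h2, h]
    · rw [if_neg (by omega), Nat.add_sub_cancel]
      have e2 : (-1 : ℝ) ^ (m + (k' + 1)) = -(-1 : ℝ) ^ (m + k') := by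
        rw [show m + (k' + 1) = (m + k') + 1 by ring, pow_succ]
        ring
      have e3 : (-1 : ℝ) ^ (m + 1 + (k' + 1)) = (-1 : ℝ) ^ (m + k') := by
        rw [show m + 1 + (k' + 1) = (m + k') + 2 by ring, pow_add]
        norm_num
      have h2 := ih (k' + 1)
      have h3 := ih k'
      rw [e2] at h2
      rw [e3]
      rcases hc with h | h
      · rw [h]
        nlinarith [h3]
      · nlinarith [h3, mul_nonneg h h2]

lemma key (hG : IsPEO G) :
    ∀ m, m ≤ n → ∀ k,
      (∑ i ∈ Finset.range (n+1), TT G m i * (graphStirlingInduced G i k : ℝ))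
        = if m = k then 1 else 0 := by
  intro m
  induction m with
  | zero =>
    intro _ k
    rw [Finset.sum_eq_single_of_mem 0 (Finset.mem_range.mpr (by omega))]
    · rw [TT_zero, if_pos rfl, one_mul, st_zero]
      rcases Nat.eq_zero_or_pos k with h | h
      · subst h; norm_num
      · rw [if_neg (by omega), if_neg (by omega)]
        norm_num
    · intro i _ hi
      rw [TT_zero, if_neg hi, zero_mul]
  | succ m ih =>
    intro hm k
    have hmn : m < n := by omega
    have hsplit : ∀ i ∈ Finset.range (n+1),
        TT G (m+1) i * (graphStirlingInduced G i k : ℝ)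
          = (if i = 0 then 0 else TT G m (i-1)) * (graphStirlingInduced G i k : ℝ)
            - ((m : ℝ) - (dd G i : ℝ)) * TT G m i * (graphStirlingInduced G i k : ℝ) := by
      intro i _
      rw [TT_succ]
      ring
    rw [Finset.sum_congr rfl hsplit, Finset.sum_sub_distrib]
    -- first sum
    have hS1 : (∑ i ∈ Finset.range (n+1),
        (if i = 0 then 0 else TT G m (i-1)) * (graphStirlingInduced G i k : ℝ))
        = (if k = 0 then (0:ℝ) else ∑ i ∈ Finset.range (n+1),
            TT G m i * (graphStirlingInduced G i (k-1) : ℝ))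
          + ∑ i ∈ Finset.range (n+1),
              TT G m i * ((k : ℝ) - (dd G i : ℝ)) * (graphStirlingInduced G i k : ℝ) := by
      have : ∀ i ∈ Finset.range n,
          (if i + 1 = 0 then (0:ℝ) else TT G m (i+1-1)) * (graphStirlingInduced G (i+1) k : ℝ)
            = TT G m i * (if k = 0 then (0:ℝ) else (graphStirlingInduced G i (k-1) : ℝ))
              + TT G m i * ((k : ℝ) - (dd G i : ℝ)) * (graphStirlingInduced G i k : ℝ) := by
        intro i hi
        rw [if_neg (by omega), Nat.add_sub_cancel,
          st_rec_real hG (Finset.mem_range.mp hi) k]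
        ring
      rw [Finset.sum_range_succ' (fun i =>
        (if i = 0 then 0 else TT G m (i-1)) * (graphStirlingInduced G i k : ℝ)) n,
        Finset.sum_congr rfl this, Finset.sum_add_distrib]
      have hTTn : TT G m n = 0 := TT_high m n hmn
      have hz : (if (0:ℕ) = 0 then (0:ℝ) else TT G m (0-1)) * (graphStirlingInduced G 0 k : ℝ)
          = 0 := by simp
      rw [hz, add_zero]
      congr 1
      · rcases Nat.eq_zero_or_pos k with h | h
        · subst h
          simp
        · rw [if_neg (by omega), Finset.sum_range_succ, hTTn, zero_mul, add_zero]
          exact Finset.sum_congr rfl (fun i _ => by rw [if_neg (by omega)])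
      · rw [Finset.sum_range_succ, hTTn]
        simp
    rw [hS1]
    have hS2 : (∑ i ∈ Finset.range (n+1),
          TT G m i * ((k : ℝ) - (dd G i : ℝ)) * (graphStirlingInduced G i k : ℝ))
        - (∑ i ∈ Finset.range (n+1),
            ((m : ℝ) - (dd G i : ℝ)) * TT G m i * (graphStirlingInduced G i k : ℝ))
        = ((k : ℝ) - (m : ℝ)) * (if m = k then (1:ℝ) else 0) := by
      rw [← ih (by omega) k, ← Finset.sum_sub_distrib, Finset.mul_sum]
      exact Finset.sum_congr rfl (fun i _ => by ring)
    have hfin : (if k = 0 then (0:ℝ) else ∑ i ∈ Finset.range (n+1),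
            TT G m i * (graphStirlingInduced G i (k-1) : ℝ))
          + (((k : ℝ) - (m : ℝ)) * (if m = k then (1:ℝ) else 0))
        = if m + 1 = k then 1 else 0 := by
      rcases Nat.eq_zero_or_pos k with h | h
      · subst h
        rcases Nat.eq_zero_or_pos m with h' | h'
        · subst h'; norm_num
        · rw [if_pos rfl, if_neg (by omega), if_neg (by omega)]
          ring
      · rw [if_neg (by omega), ih (by omega) (k-1)]
        by_cases hmk : m = k
        · rw [if_neg (by omega), if_pos hmk, hmk]
          rw [if_neg (by omega)]
          ring
        · by_cases hmk1 : m = k - 1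
          · rw [if_pos hmk1, if_neg hmk, if_pos (by omega)]
            ring
          · rw [if_neg hmk1, if_neg hmk, if_neg (by omega)]
            ring
    calc ((if k = 0 then (0:ℝ) else ∑ i ∈ Finset.range (n+1),
            TT G m i * (graphStirlingInduced G i (k-1) : ℝ))
          + ∑ i ∈ Finset.range (n+1),
              TT G m i * ((k : ℝ) - (dd G i : ℝ)) * (graphStirlingInduced G i k : ℝ))
        - (∑ i ∈ Finset.range (n+1),
            ((m : ℝ) - (dd G i : ℝ)) * TT G m i * (graphStirlingInduced G i k : ℝ))
        = (if k = 0 then (0:ℝ) else ∑ i ∈ Finset.range (n+1),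
            TT G m i * (graphStirlingInduced G i (k-1) : ℝ))
          + (((k : ℝ) - (m : ℝ)) * (if m = k then (1:ℝ) else 0)) := by
          rw [← hS2]; ring
      _ = if m + 1 = k then 1 else 0 := hfin

end Stmt4Aux

theorem stmt4 {n : ℕ} (G : SimpleGraph (Fin n)) (hG : IsPEO G) (m k : Fin (n + 1)) :
    0 ≤ (-1 : ℝ) ^ ((m : ℕ) + (k : ℕ)) *
      (Matrix.of fun i j : Fin (n + 1) => (graphStirlingInduced G i j : ℝ))⁻¹ m k := by
  classical
  have hTS : (Matrix.of fun i j : Fin (n+1) => Stmt4Aux.TT G (i : ℕ) (j : ℕ)) *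
      (Matrix.of fun i j : Fin (n + 1) => (graphStirlingInduced G i j : ℝ)) = 1 := by
    ext i k
    rw [Matrix.mul_apply]
    simp only [Matrix.of_apply]
    rw [Fin.sum_univ_eq_sum_range
      (fun t => Stmt4Aux.TT G (i : ℕ) t * (graphStirlingInduced G t (k : ℕ) : ℝ)) (n+1)]
    rw [Stmt4Aux.key hG (i : ℕ) (Nat.lt_succ_iff.mp i.isLt) (k : ℕ), Matrix.one_apply]
    by_cases h : i = k
    · rw [if_pos h, if_pos (by rw [h])]
    · rw [if_neg h, if_neg (fun hh => h (Fin.ext hh))]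
  rw [Matrix.inv_eq_left_inv hTS]
  simpa using Stmt4Aux.TT_sign (m : ℕ) (k : ℕ)
end

section
/- Let G be a chordal graph on n vertices with perfect elimination order v_1, ..., v_n, and for each i let e_i(G) be the number of neighbors of v_i among v_1, ..., v_{i-1}. Then (e_1(G), ..., e_n(G)) is a restricted growth sequence relative to (0, 1, ..., n-1); equivalently, e_1(G) = 0 and e_{k}(G) ≤ 1 + max_{i < k} e_i(G) for all 1 < k ≤ n. -/
/-- The number of neighbors of `v` among the earlier vertices. -/
noncomputable def earlierNbrs {n : ℕ} (G : SimpleGraph (Fin n)) (v : Fin n) : ℕ :=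
  Nat.card {j : Fin n // j < v ∧ G.Adj j v}

/-- The sequence `(e_1(G), …, e_n(G))` (0-indexed, extended by `0`), as reals. -/
noncomputable def eSeq {n : ℕ} (G : SimpleGraph (Fin n)) : ℕ → ℝ :=
  fun i => if h : i < n then (earlierNbrs G ⟨i, h⟩ : ℝ) else 0

open scoped Classical in
lemma earlierNbrs_eq {n : ℕ} (G : SimpleGraph (Fin n)) (v : Fin n) :
    earlierNbrs G v =
      (Finset.univ.filter (fun j : Fin n => j < v ∧ G.Adj j v)).card := by
  classical
  rw [earlierNbrs, Nat.card_eq_fintype_card, Fintype.card_subtype]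

open scoped Classical in
lemma key_peo {n : ℕ} (G : SimpleGraph (Fin n)) (hG : IsPEO G) (v : Fin n)
    (h : 0 < earlierNbrs G v) :
    ∃ j : Fin n, j < v ∧ earlierNbrs G v ≤ earlierNbrs G j + 1 := by
  rw [earlierNbrs_eq] at h
  set S := Finset.univ.filter (fun j : Fin n => j < v ∧ G.Adj j v) with hS
  have hne : S.Nonempty := Finset.card_pos.mp h
  set j := S.max' hne with hj
  have hjS : j ∈ S := S.max'_mem hne
  have hjv : j < v ∧ G.Adj j v := by simpa [hS] using hjS
  refine ⟨j, hjv.1, ?_⟩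
  rw [earlierNbrs_eq, earlierNbrs_eq, ← hS]
  have hsub : S.erase j ⊆ Finset.univ.filter (fun k : Fin n => k < j ∧ G.Adj k j) := by
    intro k hk
    have hkj : k ≠ j := Finset.ne_of_mem_erase hk
    have hkS : k ∈ S := Finset.mem_of_mem_erase hk
    have hkv : k < v ∧ G.Adj k v := by simpa [hS] using hkS
    have hklt : k < j := lt_of_le_of_ne (S.le_max' k hkS) hkj
    exact Finset.mem_filter.mpr ⟨Finset.mem_univ _,
      hklt, hG v k j hkv.1 hjv.1 hkj hkv.2 hjv.2⟩
  have := Finset.card_le_card hsub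
  have h2 : S.card - 1 ≤ (Finset.univ.filter (fun k : Fin n => k < j ∧ G.Adj k j)).card := by
    simpa [Finset.card_erase_of_mem hjS] using this
  omega

noncomputable def eN {n : ℕ} (G : SimpleGraph (Fin n)) (i : ℕ) : ℕ :=
  if h : i < n then earlierNbrs G ⟨i, h⟩ else 0

lemma eSeq_eq_eN {n : ℕ} (G : SimpleGraph (Fin n)) (i : ℕ) :
    eSeq G i = (eN G i : ℝ) := by
  unfold eSeq eN; split <;> simp

/-- For a chordal graph with perfect elimination order `v_1, …, v_n`, the sequence
`(e_1(G), …, e_n(G))` is a restricted growth sequence relative to `(0, 1, …, n-1)`. -/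
theorem stmt6 {n : ℕ} (G : SimpleGraph (Fin n)) (hG : IsPEO G) :
    ∀ i < n, eSeq G i ≤ ((rgsF (fun t => (t : ℝ)) (eSeq G) i : ℕ) : ℝ) := by
  set F := rgsF (fun t => (t : ℝ)) (eSeq G) with hF
  have hstep : ∀ i, F (i + 1) = if eN G i = F i then F i + 1 else F i := by
    intro i
    have hc : (eSeq G i = ((F i : ℕ) : ℝ)) ↔ eN G i = F i := by
      rw [eSeq_eq_eN]; exact Nat.cast_inj
    rw [hF]
    show (if eSeq G i = ((rgsF (fun t => (t : ℝ)) (eSeq G) i : ℕ) : ℝ)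
        then rgsF (fun t => (t : ℝ)) (eSeq G) i + 1
        else rgsF (fun t => (t : ℝ)) (eSeq G) i) = _
    rw [← hF]
    by_cases h : eN G i = F i
    · rw [if_pos (hc.mpr h), if_pos h]
    · rw [if_neg (fun hh => h (hc.mp hh)), if_neg h]
  have hmono : ∀ i, F i ≤ F (i + 1) := by
    intro i; rw [hstep]; split <;> omega
  have hle : ∀ i, (∀ j < i, eN G j < F i) → eN G i ≤ F i := by
    intro i hlt
    by_cases hn : i < n
    · rcases Nat.eq_zero_or_pos (eN G i) with h0 | hpos
      · omega
      · have hpos' : 0 < earlierNbrs G ⟨i, hn⟩ := by simpa [eN, hn] using hpos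
        obtain ⟨j, hjv, hj⟩ := key_peo G hG ⟨i, hn⟩ hpos'
        have hji : (j : ℕ) < i := hjv
        have hej : eN G (j : ℕ) = earlierNbrs G j := by
          simp [eN, lt_trans hji hn]
        have := hlt (j : ℕ) hji
        have heni : eN G i = earlierNbrs G ⟨i, hn⟩ := by simp [eN, hn]
        omega
    · simp [eN, hn]
  have main : ∀ i, ∀ j < i, eN G j < F i := by
    intro i
    induction i with
    | zero => intro j hj; omega
    | succ i ih =>
      have h1 : eN G i ≤ F i := hle i ih
      intro j hj
      rcases Nat.lt_succ_iff_lt_or_eq.mp hj with h | h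
      · exact lt_of_lt_of_le (ih j h) (hmono i)
      · subst h; rw [hstep]; split <;> omega
  intro i hi
  rw [eSeq_eq_eN]
  exact_mod_cast hle i (main i)
end

section
/- Let (e'_1, ..., e'_n) be a sequence of non-negative integers with e'_1 = 0 and e'_{i+1} ≤ 1 + max_{j ≤ i} e'_j for all 1 ≤ i < n (i.e., a restricted growth sequence relative to (0, 1, ..., n-1)). Then there exists a chordal graph G on vertices v_1, ..., v_n such that v_1, ..., v_n is a perfect elimination order of G and, for each i, the number of neighbors of v_i among v_1, ..., v_{i-1} equals e'_i. -/

noncomputable def jmax (e' : ℕ → ℕ) (i : ℕ) : ℕ :=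
  (Finset.exists_mem_eq_sup (Finset.range (i+1)) ⟨0, by simp⟩ e').choose

lemma jmax_lt (e' : ℕ → ℕ) (i : ℕ) : jmax e' i < i + 1 := by
  have := (Finset.exists_mem_eq_sup (Finset.range (i+1)) ⟨0, by simp⟩ e').choose_spec.1
  simpa [jmax] using this

lemma jmax_sup (e' : ℕ → ℕ) (i : ℕ) : (Finset.range (i+1)).sup e' = e' (jmax e' i) :=
  (Finset.exists_mem_eq_sup (Finset.range (i+1)) ⟨0, by simp⟩ e').choose_spec.2

noncomputable def nb (e' : ℕ → ℕ) : ℕ → Finset ℕ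
  | 0 => ∅
  | (i+1) => (Finset.exists_subset_card_eq (s := insert (jmax e' i) (nb e' (jmax e' i)))
      (n := min (e' (i+1)) (insert (jmax e' i) (nb e' (jmax e' i))).card)
      (min_le_right _ _)).choose
  decreasing_by exact jmax_lt e' i

lemma nb_succ_spec (e' : ℕ → ℕ) (i : ℕ) :
    nb e' (i+1) ⊆ insert (jmax e' i) (nb e' (jmax e' i)) ∧
    (nb e' (i+1)).card =
      min (e' (i+1)) (insert (jmax e' i) (nb e' (jmax e' i))).card := by
  rw [nb]
  exact (Finset.exists_subset_card_eq (min_le_right _ _)).choose_spec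

def R (e' : ℕ → ℕ) (a b : ℕ) : Prop :=
  (a < b ∧ a ∈ nb e' b) ∨ (b < a ∧ b ∈ nb e' a)

lemma nb_subset_range (e' : ℕ → ℕ) : ∀ i, nb e' i ⊆ Finset.range i := by
  intro i
  induction i using Nat.strong_induction_on with
  | _ i ih =>
    match i with
    | 0 => simp [nb]
    | (i+1) =>
      intro a ha
      have h1 := (nb_succ_spec e' i).1 ha
      rcases Finset.mem_insert.1 h1 with h | h
      · subst h; exact Finset.mem_range.2 (jmax_lt e' i)
      · have := ih (jmax e' i) (jmax_lt e' i) h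
        exact Finset.mem_range.2 (lt_trans (Finset.mem_range.1 this) (jmax_lt e' i))

lemma nb_clique (e' : ℕ → ℕ) :
    ∀ i, ∀ a ∈ nb e' i, ∀ b ∈ nb e' i, a ≠ b → R e' a b := by
  intro i
  induction i using Nat.strong_induction_on with
  | _ i ih =>
    match i with
    | 0 => simp [nb]
    | (i+1) =>
      intro a ha b hb hab
      have ha' := (nb_succ_spec e' i).1 ha
      have hb' := (nb_succ_spec e' i).1 hb
      set j := jmax e' i
      rcases Finset.mem_insert.1 ha' with ha1 | ha1 <;>
        rcases Finset.mem_insert.1 hb' with hb1 | hb1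
      · exact absurd (ha1.trans hb1.symm) hab
      · subst ha1
        right
        exact ⟨Finset.mem_range.1 (nb_subset_range e' j hb1), hb1⟩
      · subst hb1
        left
        exact ⟨Finset.mem_range.1 (nb_subset_range e' j ha1), ha1⟩
      · exact ih j (jmax_lt e' i) a ha1 b hb1 hab

lemma nb_card (n : ℕ) (e' : ℕ → ℕ) (h0 : 0 < n → e' 0 = 0)
    (hrg : ∀ i, 0 < i → i < n → e' i ≤ 1 + (Finset.range i).sup e') :
    ∀ i, i < n → (nb e' i).card = e' i := by
  intro i
  induction i using Nat.strong_induction_on with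
  | _ i ih =>
    match i with
    | 0 =>
      intro hn
      simp [nb, h0 hn]
    | (i+1) =>
      intro hn
      set j := jmax e' i with hj
      have hjlt : j < i + 1 := jmax_lt e' i
      have hjn : j < n := lt_trans hjlt hn
      have hnotmem : j ∉ nb e' j := fun h =>
        lt_irrefl j (Finset.mem_range.1 (nb_subset_range e' j h))
      have hcard : (insert j (nb e' j)).card = e' j + 1 := by
        rw [Finset.card_insert_of_notMem hnotmem, ih j hjlt hjn]
      have hle : e' (i+1) ≤ e' j + 1 := by
        have := hrg (i+1) (Nat.succ_pos i) hn
        rw [jmax_sup e' i, ← hj] at this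
        omega
      rw [(nb_succ_spec e' i).2, hcard]
      omega

/-- Any restricted growth sequence relative to `(0, 1, …, n-1)` — i.e. a sequence
of non-negative integers with `e'_1 = 0` and `e'_{i+1} ≤ 1 + max_{j ≤ i} e'_j`
(0-indexed here) — is realized as the earlier-neighbor counts of a chordal graph
for which the natural order is a perfect elimination order. -/
theorem stmt7 (n : ℕ) (e' : ℕ → ℕ) (h0 : 0 < n → e' 0 = 0)
    (hrg : ∀ i, 0 < i → i < n → e' i ≤ 1 + (Finset.range i).sup e') :
    ∃ G : SimpleGraph (Fin n), IsPEO G ∧ ∀ v : Fin n, earlierNbrs G v = e' (v : ℕ) := by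
  refine ⟨{ Adj := fun u v => R e' u.val v.val
            symm := by
              refine ⟨fun u v h => ?_⟩
              rcases h with h | h
              · exact Or.inr h
              · exact Or.inl h
            loopless := by
              refine ⟨fun u h => ?_⟩
              rcases h with h | h <;> exact lt_irrefl _ h.1 }, ?_, ?_⟩
  · intro k i j hik hjk hij hadjik hadjjk
    have hi : (i : ℕ) ∈ nb e' k := by
      rcases hadjik with h | h
      · exact h.2
      · exact absurd h.1 (not_lt.2 (le_of_lt hik))
    have hj : (j : ℕ) ∈ nb e' k := by
      rcases hadjjk with h | h
      · exact h.2
      · exact absurd h.1 (not_lt.2 (le_of_lt hjk))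
    exact nb_clique e' k i hi j hj (fun h => hij (Fin.val_injective h))
  · intro v
    classical
    have key : (Finset.univ.filter
        (fun j : Fin n => j < v ∧ R e' j.val v.val)).card = (nb e' v.val).card := by
      apply Finset.card_bij (fun (j : Fin n) _ => j.val)
      · intro a ha
        obtain ⟨hlt, hadj⟩ := Finset.mem_filter.1 ha |>.2
        rcases hadj with h | h
        · exact h.2
        · exact absurd h.1 (not_lt.2 (le_of_lt hlt))
      · intro a _ b _ h
        exact Fin.val_injective h
      · intro a ha
        have halt : a < (v : ℕ) := Finset.mem_range.1 (nb_subset_range e' v.val ha)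
        have han : a < n := lt_trans halt v.isLt
        refine ⟨⟨a, han⟩, Finset.mem_filter.2 ⟨Finset.mem_univ _, ?_, Or.inl ⟨halt, ha⟩⟩, rfl⟩
        exact halt
      
    rw [earlierNbrs]
    rw [Nat.card_eq_fintype_card, Fintype.card_subtype]
    show (Finset.univ.filter (fun j : Fin n => j < v ∧ R e' j.val v.val)).card = e' v.val
    rw [key, nb_card n e' h0 hrg v.val v.isLt]
end

section
/- For arbitrary real sequences a = (a_1, a_2, ...) and e = (e_1, e_2, ...), and all m ≥ k ≥ 0, S^{a,e}(m,k) = ∑_{S} ∏_{i=1}^{m-k} (a_{s_i - i + 1} - e_{s_i}), where the sum is over all subsets S = {s_1, ..., s_{m-k}} of {1, ..., m} with s_1 < s_2 < ... < s_{m-k}. -/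
open Polynomial Finset

noncomputable def Tfun (a e : ℕ → ℝ) (n m : ℕ) : ℝ :=
  ∑ s : {s : Fin n → Fin m // ∀ i j, i < j → s i < s j},
    ∏ i : Fin n, (a ((s.1 i : ℕ) - (i : ℕ)) - e (s.1 i : ℕ))

lemma Tfun_zero (a e : ℕ → ℝ) (m : ℕ) : Tfun a e 0 m = 1 := by
  haveI : Unique {s : Fin 0 → Fin m // ∀ i j, i < j → s i < s j} :=
    ⟨⟨⟨fun i => i.elim0, fun i => i.elim0⟩⟩, fun s => Subtype.ext (funext fun i => i.elim0)⟩
  simp [Tfun]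

lemma Tfun_of_lt (a e : ℕ → ℝ) {n m : ℕ} (h : m < n) : Tfun a e n m = 0 := by
  haveI : IsEmpty {s : Fin n → Fin m // ∀ i j, i < j → s i < s j} := by
    constructor
    rintro ⟨s, hs⟩
    have hsm : StrictMono s := fun i j hij => hs i j hij
    have := Fintype.card_le_of_injective s hsm.injective
    simp only [Fintype.card_fin] at this
    omega
  simp [Tfun]

def eqvA (n m : ℕ) : {s : Fin n → Fin m // ∀ i j, i < j → s i < s j} ≃
    {s : {s : Fin (n+1) → Fin (m+1) // ∀ i j, i < j → s i < s j} //
      s.1 (Fin.last n) = Fin.last m} where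
  toFun s := ⟨⟨Fin.snoc (fun i => (s.1 i).castSucc) (Fin.last m), by
      intro i j hij
      induction j using Fin.lastCases with
      | last =>
        obtain ⟨i', rfl⟩ := Fin.exists_castSucc_eq.2 (ne_of_lt hij)
        simp only [Fin.snoc_castSucc, Fin.snoc_last]
        exact Fin.castSucc_lt_last _
      | cast j' =>
        have hi : i ≠ Fin.last n :=
          ne_of_lt (lt_of_lt_of_le hij (le_of_lt (Fin.castSucc_lt_last _)))
        obtain ⟨i', rfl⟩ := Fin.exists_castSucc_eq.2 hi
        simp only [Fin.snoc_castSucc, Fin.castSucc_lt_castSucc_iff]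
        exact s.2 _ _ (by simpa using hij)⟩, by simp⟩
  invFun s := ⟨fun i => (s.1.1 i.castSucc).castPred
      (ne_of_lt (lt_of_lt_of_eq (s.1.2 _ _ (Fin.castSucc_lt_last i)) s.2)), by
    intro i j hij
    rw [Fin.castPred_lt_castPred_iff]
    exact s.1.2 _ _ (by simpa using hij)⟩
  left_inv s := by
    apply Subtype.ext; funext i
    simp
  right_inv s := by
    apply Subtype.ext; apply Subtype.ext; funext j
    induction j using Fin.lastCases with
    | last => simpa using s.2.symm
    | cast j' => simp

def eqvB (n m : ℕ) : {s : Fin (n+1) → Fin m // ∀ i j, i < j → s i < s j} ≃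
    {s : {s : Fin (n+1) → Fin (m+1) // ∀ i j, i < j → s i < s j} //
      ¬ s.1 (Fin.last n) = Fin.last m} where
  toFun s := ⟨⟨fun i => (s.1 i).castSucc, by
      intro i j hij
      simpa [Fin.castSucc_lt_castSucc_iff] using s.2 i j hij⟩,
    ne_of_lt (Fin.castSucc_lt_last _)⟩
  invFun s := ⟨fun i => (s.1.1 i).castPred (by
      rcases eq_or_lt_of_le (Fin.le_last i) with h | h
      · rw [h]; exact s.2
      · exact ne_of_lt (lt_trans (s.1.2 _ _ h)
          (lt_of_le_of_ne (Fin.le_last _) s.2))), by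
    intro i j hij
    rw [Fin.castPred_lt_castPred_iff]
    exact s.1.2 _ _ hij⟩
  left_inv s := by
    apply Subtype.ext; funext i
    apply Fin.val_injective
    rw [Fin.coe_castPred, Fin.coe_castSucc]
  right_inv s := by
    apply Subtype.ext; apply Subtype.ext; funext i
    simp

lemma Tfun_rec (a e : ℕ → ℝ) (n m : ℕ) :
    Tfun a e (n + 1) (m + 1) = (a (m - n) - e m) * Tfun a e n m + Tfun a e (n + 1) m := by
  classical
  rw [Tfun, Tfun, Tfun]
  rw [← Fintype.sum_subtype_add_sum_subtype
    (fun s : {s : Fin (n+1) → Fin (m+1) // ∀ i j, i < j → s i < s j} =>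
      s.1 (Fin.last n) = Fin.last m)
    (fun s => ∏ i : Fin (n+1), (a ((s.1 i : ℕ) - (i : ℕ)) - e (s.1 i : ℕ)))]
  congr 1
  · rw [← Equiv.sum_comp (eqvA n m)]
    rw [Finset.mul_sum]
    apply Finset.sum_congr rfl
    intro s _
    have hfun : (eqvA n m s).1.1 = Fin.snoc (fun i => (s.1 i).castSucc) (Fin.last m) := rfl
    rw [Fin.prod_univ_castSucc]
    have hlast : (((eqvA n m s).1.1 (Fin.last n) : Fin (m+1)) : ℕ) = m := by
      rw [hfun, Fin.snoc_last, Fin.val_last]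
    have hcast : ∀ i : Fin n, (((eqvA n m s).1.1 i.castSucc : Fin (m+1)) : ℕ) = (s.1 i : ℕ) := by
      intro i
      rw [hfun, Fin.snoc_castSucc, Fin.coe_castSucc]
    have hprod : (∏ i : Fin n,
        (a ((((eqvA n m s).1.1 i.castSucc : Fin (m+1)) : ℕ) - ((i.castSucc : Fin (n+1)) : ℕ))
          - e (((eqvA n m s).1.1 i.castSucc : Fin (m+1)) : ℕ)))
        = ∏ i : Fin n, (a ((s.1 i : ℕ) - (i : ℕ)) - e (s.1 i : ℕ)) := by
      apply Finset.prod_congr rfl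
      intro i _
      rw [hcast i, Fin.coe_castSucc]
    rw [hprod, hlast]
    rw [Fin.val_last, mul_comm]
  · rw [← Equiv.sum_comp (eqvB n m)]
    apply Finset.sum_congr rfl
    intro s _
    apply Finset.prod_congr rfl
    intro i _
    have h1 : (eqvB n m s).1.1 i = (s.1 i).castSucc := rfl
    rw [h1, Fin.coe_castSucc]

lemma coeff_zero_of_sum_eq_zero (a : ℕ → ℝ) :
    ∀ (n : ℕ) (c : ℕ → ℝ),
      (∑ k ∈ Finset.range n, C (c k) * ∏ i ∈ Finset.range k, (X - C (a i))) = 0 →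
      ∀ k < n, c k = 0 := by
  intro n
  induction n with
  | zero => intro c _ k hk; omega
  | succ n ih =>
    intro c hc
    have hdeg : ∀ k : ℕ, (∏ i ∈ Finset.range k, (X - C (a i))).natDegree = k := by
      intro k
      rw [Polynomial.natDegree_prod_of_monic _ _ fun i _ => monic_X_sub_C _]
      simp
    have hmonic : ∀ k : ℕ, (∏ i ∈ Finset.range k, (X - C (a i))).Monic := fun k =>
      monic_prod_of_monic _ _ fun i _ => monic_X_sub_C _
    have hcn : c n = 0 := by
      have h0 := congrArg (fun p => Polynomial.coeff p n) hc
      simp only [Polynomial.finset_sum_coeff, Polynomial.coeff_zero] at h0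
      rw [Finset.sum_range_succ] at h0
      rw [Finset.sum_eq_zero (fun k hk => ?_)] at h0
      · have h1 : (∏ i ∈ Finset.range n, (X - C (a i))).coeff n = 1 := by
          have := (hmonic n).coeff_natDegree
          rwa [hdeg n] at this
        rw [Polynomial.coeff_C_mul, h1] at h0
        simpa using h0
      · rw [Polynomial.coeff_C_mul,
          Polynomial.coeff_eq_zero_of_natDegree_lt (by rw [hdeg]; exact Finset.mem_range.1 hk),
          mul_zero]
    have hrest : (∑ k ∈ Finset.range n, C (c k) * ∏ i ∈ Finset.range k, (X - C (a i))) = 0 := by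
      rw [Finset.sum_range_succ, hcn] at hc
      simpa using hc
    intro k hk
    rcases Nat.lt_succ_iff_lt_or_eq.1 hk with h | rfl
    · exact ih c hrest k h
    · exact hcn

lemma coeff_unique (a : ℕ → ℝ) (n : ℕ) (c d : ℕ → ℝ)
    (h : (∑ k ∈ Finset.range n, C (c k) * ∏ i ∈ Finset.range k, (X - C (a i))) =
      ∑ k ∈ Finset.range n, C (d k) * ∏ i ∈ Finset.range k, (X - C (a i))) :
    ∀ k < n, c k = d k := by
  intro k hk
  have h0 : (∑ k ∈ Finset.range n, C (c k - d k) * ∏ i ∈ Finset.range k, (X - C (a i))) = 0 := by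
    have : ∀ k : ℕ, C (c k - d k) * ∏ i ∈ Finset.range k, (X - C (a i)) =
        C (c k) * ∏ i ∈ Finset.range k, (X - C (a i)) -
        C (d k) * ∏ i ∈ Finset.range k, (X - C (a i)) := by
      intro k; rw [map_sub, sub_mul]
    simp only [this]
    rw [Finset.sum_sub_distrib, h, sub_self]
  have h1 : c k - d k = 0 := coeff_zero_of_sum_eq_zero a n (fun k => c k - d k) h0 k hk
  linarith

lemma S_rec (a e : ℕ → ℝ) (S : ℕ → ℕ → ℝ) (hS : SaeRel a e S) (m : ℕ) :
    ∀ k < m + 2, S (m + 1) k = (if k = 0 then 0 else S m (k - 1)) + (a k - e m) * S m k := by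
  have key : (∑ k ∈ Finset.range (m + 2), C (S (m+1) k) * ∏ i ∈ Finset.range k, (X - C (a i))) =
      ∑ k ∈ Finset.range (m + 2),
        C ((if k = 0 then 0 else S m (k - 1)) + (a k - e m) * S m k) *
          ∏ i ∈ Finset.range k, (X - C (a i)) := by
    rw [← hS.2 (m+1)]
    rw [Finset.prod_range_succ, hS.2 m]
    have expand : ∀ k : ℕ,
        C (S m k) * (∏ i ∈ Finset.range k, (X - C (a i))) * (X - C (e m)) =
        C (S m k) * ∏ i ∈ Finset.range (k+1), (X - C (a i)) +
        C ((a k - e m) * S m k) * ∏ i ∈ Finset.range k, (X - C (a i)) := by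
      intro k
      rw [Finset.prod_range_succ, map_mul, map_sub]
      ring
    rw [Finset.sum_mul]
    calc (∑ k ∈ Finset.range (m+1),
            C (S m k) * (∏ i ∈ Finset.range k, (X - C (a i))) * (X - C (e m)))
        = ∑ k ∈ Finset.range (m+1),
            (C (S m k) * ∏ i ∈ Finset.range (k+1), (X - C (a i)) +
             C ((a k - e m) * S m k) * ∏ i ∈ Finset.range k, (X - C (a i))) := by
          exact Finset.sum_congr rfl fun k _ => expand k
      _ = (∑ k ∈ Finset.range (m+1), C (S m k) * ∏ i ∈ Finset.range (k+1), (X - C (a i))) +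
          ∑ k ∈ Finset.range (m+1), C ((a k - e m) * S m k) * ∏ i ∈ Finset.range k, (X - C (a i)) := by
          rw [Finset.sum_add_distrib]
      _ = (∑ k ∈ Finset.range (m+2),
            C (if k = 0 then 0 else S m (k-1)) * ∏ i ∈ Finset.range k, (X - C (a i))) +
          ∑ k ∈ Finset.range (m+2), C ((a k - e m) * S m k) * ∏ i ∈ Finset.range k, (X - C (a i)) := by
          congr 1
          · rw [Finset.sum_range_succ' (fun k =>
              C (if k = 0 then 0 else S m (k-1)) * ∏ i ∈ Finset.range k, (X - C (a i))) (m+1)]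
            simp
          · rw [Finset.sum_range_succ (fun k =>
              C ((a k - e m) * S m k) * ∏ i ∈ Finset.range k, (X - C (a i))) (m+1)]
            rw [hS.1 m (m+1) (Nat.lt_succ_self m)]
            simp
      _ = ∑ k ∈ Finset.range (m + 2),
            C ((if k = 0 then 0 else S m (k - 1)) + (a k - e m) * S m k) *
              ∏ i ∈ Finset.range k, (X - C (a i)) := by
          rw [← Finset.sum_add_distrib]
          exact Finset.sum_congr rfl fun k _ => by rw [map_add, add_mul]
  exact coeff_unique a (m + 2) _ _ key

lemma S_zero_zero (a e : ℕ → ℝ) (S : ℕ → ℕ → ℝ) (hS : SaeRel a e S) : S 0 0 = 1 := by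
  have h := hS.2 0
  simp at h
  exact_mod_cast (Polynomial.C_inj.1 (by simpa using h.symm))

lemma S_eq_Tfun (a e : ℕ → ℝ) (S : ℕ → ℕ → ℝ) (hS : SaeRel a e S) :
    ∀ m k, k ≤ m → S m k = Tfun a e (m - k) m := by
  intro m
  induction m with
  | zero =>
    intro k hk
    interval_cases k
    rw [S_zero_zero a e S hS, Tfun_zero]
  | succ m ih =>
    intro k hk
    match k with
    | 0 =>
      rw [S_rec a e S hS m 0 (by omega)]
      simp only [if_pos rfl, zero_add]
      rw [ih 0 (Nat.zero_le _)]
      have hr := Tfun_rec a e m m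
      rw [Tfun_of_lt a e (Nat.lt_succ_self m)] at hr
      simp only [Nat.sub_self, Nat.sub_zero, add_zero] at hr ⊢
      rw [hr]
      simp
    | k + 1 =>
      rw [S_rec a e S hS m (k+1) (by omega)]
      rw [if_neg (Nat.succ_ne_zero k)]
      simp only [Nat.add_sub_cancel]
      rcases Nat.lt_succ_iff_lt_or_eq.1 (Nat.lt_succ_of_le hk) with h | h
      · -- k + 1 ≤ m
        have hk1m : k + 1 ≤ m := by omega
        rw [ih k (by omega), ih (k+1) hk1m]
        have hr := Tfun_rec a e (m - (k+1)) m
        have h1 : m - (k + 1) + 1 = m - k := by omega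
        have h2 : m - (m - (k + 1)) = k + 1 := by omega
        rw [h1, h2] at hr
        have h3 : m + 1 - (k + 1) = m - k := by omega
        rw [h3, hr]
        ring
      · -- k + 1 = m + 1, i.e. k = m
        have hkm2 : k = m := by omega
        rw [hkm2, hS.1 m (m+1) (Nat.lt_succ_self m), ih m le_rfl]
        have h3 : m + 1 - (m + 1) = 0 := by omega
        rw [h3, Nat.sub_self, Tfun_zero, Tfun_zero]
        ring

/-- `S^{a,e}(m,k) = ∑_{1 ≤ s_1 < ⋯ < s_{m-k} ≤ m} ∏_{i=1}^{m-k} (a_{s_i-i+1} - e_{s_i})`,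
where the strictly increasing sequences `s` are encoded (0-indexed) as strictly
monotone functions `Fin (m-k) → Fin m`. -/
theorem stmt8 (a e : ℕ → ℝ) (S : ℕ → ℕ → ℝ) (hS : SaeRel a e S)
    (m k : ℕ) (hkm : k ≤ m) :
    S m k = ∑ s : {s : Fin (m - k) → Fin m // ∀ i j, i < j → s i < s j},
      ∏ i : Fin (m - k), (a ((s.1 i : ℕ) - (i : ℕ)) - e (s.1 i : ℕ)) := by
  rw [S_eq_Tfun a e S hS m k hkm, Tfun]
end

section
/- For arbitrary real sequences a = (a_1, a_2, ...) and e = (e_1, e_2, ...), and all m ≥ k ≥ 0, S^{a,e}(m,k) = ∑_{ℓ=0}^{m-k} (-1)^ℓ h_{m-k-ℓ}(a_1, ..., a_{k+1}) · σ_ℓ(e_1, ..., e_m), where h_d denotes the complete homogeneous symmetric polynomial of degree d and σ_ℓ denotes the elementary symmetric polynomial of degree ℓ. -/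
open Polynomial Finset

/-- The complete homogeneous symmetric polynomial `h_d(a_0, …, a_{t-1})`, written as
the sum over weakly increasing functions `Fin d → Fin t` (i.e. over degree-`d`
monomials in `t` variables) of the corresponding products. -/
noncomputable def hsymm (a : ℕ → ℝ) (t d : ℕ) : ℝ :=
  ∑ f : {f : Fin d → Fin t // ∀ i j, i ≤ j → f i ≤ f j}, ∏ i : Fin d, a (f.1 i : ℕ)

/-- The elementary symmetric polynomial `σ_ℓ(e_0, …, e_{m-1})`. -/
noncomputable def esymm (e : ℕ → ℝ) (m ℓ : ℕ) : ℝ :=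
  ∑ T ∈ (Finset.range m).powersetCard ℓ, ∏ i ∈ T, e i

lemma hsymm_d0 (a : ℕ → ℝ) (t : ℕ) : hsymm a t 0 = 1 := by
  have : Unique {f : Fin 0 → Fin t // ∀ i j, i ≤ j → f i ≤ f j} :=
    ⟨⟨⟨fun i => i.elim0, fun i => i.elim0⟩⟩, fun f => Subtype.ext (funext fun i => i.elim0)⟩
  simp [hsymm]

lemma hsymm_t0 (a : ℕ → ℝ) (d : ℕ) : hsymm a 0 (d + 1) = 0 := by
  have : IsEmpty {f : Fin (d+1) → Fin 0 // ∀ i j, i ≤ j → f i ≤ f j} :=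
    ⟨fun f => (f.1 0).elim0⟩
  simp [hsymm]

lemma snoc_mono {t d : ℕ} (g : Fin d → Fin (t+1)) (hg : ∀ i j, i ≤ j → g i ≤ g j) :
    ∀ i j : Fin (d+1), i ≤ j →
      (Fin.snoc g (Fin.last t) : Fin (d+1) → Fin (t+1)) i ≤
      (Fin.snoc g (Fin.last t) : Fin (d+1) → Fin (t+1)) j := by
  intro i j hij
  rcases Fin.eq_castSucc_or_eq_last j with ⟨j', rfl⟩ | rfl
  · rcases Fin.eq_castSucc_or_eq_last i with ⟨i', rfl⟩ | rfl
    · simpa [Fin.snoc_castSucc] using hg i' j' (by simpa using hij)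
    · exact absurd hij (not_le.mpr (Fin.castSucc_lt_last j'))
  · simp [Fin.snoc_last, Fin.le_last]

lemma hsymm_succ (a : ℕ → ℝ) (t d : ℕ) :
    hsymm a (t+1) (d+1) = hsymm a t (d+1) + a t * hsymm a (t+1) d := by
  classical
  have key := Finset.sum_filter_add_sum_filter_not
      (Finset.univ : Finset {f : Fin (d+1) → Fin (t+1) // ∀ i j, i ≤ j → f i ≤ f j})
      (fun f => f.1 (Fin.last d) = Fin.last t) (fun f => ∏ i, a (f.1 i : ℕ))
  have hA : ∑ f ∈ Finset.univ.filter
      (fun f : {f : Fin (d+1) → Fin (t+1) // ∀ i j, i ≤ j → f i ≤ f j} =>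
        f.1 (Fin.last d) = Fin.last t), ∏ i, a (f.1 i : ℕ)
      = a t * hsymm a (t+1) d := by
    rw [hsymm, Finset.mul_sum]
    refine Finset.sum_bij'
      (fun f hf => (⟨fun i => f.1 i.castSucc,
        fun i j hij => f.2 _ _ (Fin.castSucc_le_castSucc_iff.mpr hij)⟩ :
        {g : Fin d → Fin (t+1) // ∀ i j, i ≤ j → g i ≤ g j}))
      (fun g _ => ⟨Fin.snoc g.1 (Fin.last t), snoc_mono g.1 g.2⟩)
      (fun f hf => Finset.mem_univ _)
      (fun g _ => Finset.mem_filter.mpr ⟨Finset.mem_univ _, by simp [Fin.snoc_last]⟩)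
      ?_ ?_ ?_
    · intro f hf
      apply Subtype.ext; funext i
      rcases Fin.eq_castSucc_or_eq_last i with ⟨i', rfl⟩ | rfl
      · simp [Fin.snoc_castSucc]
      · simp only [Fin.snoc_last]
        exact ((Finset.mem_filter.mp hf).2).symm
    · intro g _
      apply Subtype.ext; funext i
      simp [Fin.snoc_castSucc]
    · intro f hf
      rw [Fin.prod_univ_castSucc]
      rw [(Finset.mem_filter.mp hf).2]
      simp [mul_comm]
  have hB : ∑ f ∈ Finset.univ.filter
      (fun f : {f : Fin (d+1) → Fin (t+1) // ∀ i j, i ≤ j → f i ≤ f j} =>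
        ¬ f.1 (Fin.last d) = Fin.last t), ∏ i, a (f.1 i : ℕ)
      = hsymm a t (d+1) := by
    rw [hsymm]
    refine Finset.sum_bij'
      (fun f hf => (⟨fun i => Fin.castPred (f.1 i) (fun h => (Finset.mem_filter.mp hf).2
          (le_antisymm (Fin.le_last _) (h ▸ f.2 i (Fin.last d) (Fin.le_last i)))),
        fun i j hij => Fin.castPred_le_castPred_iff.mpr (f.2 i j hij)⟩ :
        {g : Fin (d+1) → Fin t // ∀ i j, i ≤ j → g i ≤ g j}))
      (fun g _ => ⟨fun i => (g.1 i).castSucc,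
        fun i j hij => Fin.castSucc_le_castSucc_iff.mpr (g.2 i j hij)⟩)
      (fun f hf => Finset.mem_univ _)
      (fun g _ => Finset.mem_filter.mpr ⟨Finset.mem_univ _, (Fin.castSucc_lt_last _).ne⟩)
      ?_ ?_ ?_
    · intro f hf; apply Subtype.ext; funext i; simp [Fin.castSucc_castPred]
    · intro g _; apply Subtype.ext; funext i; simp [Fin.castPred_castSucc]
    · intro f hf; apply Finset.prod_congr rfl; intro i _; simp [Fin.coe_castPred]
  have : hsymm a (t+1) (d+1) = a t * hsymm a (t+1) d + hsymm a t (d+1) := by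
    rw [hsymm, ← key, hA, hB]
  rw [this]; ring

lemma esymm_l0 (e : ℕ → ℝ) (m : ℕ) : esymm e m 0 = 1 := by
  simp [esymm]

lemma esymm_zero_of_lt (e : ℕ → ℝ) {m ℓ : ℕ} (h : m < ℓ) : esymm e m ℓ = 0 := by
  rw [esymm, Finset.powersetCard_eq_empty.mpr (by simpa using h), Finset.sum_empty]

lemma esymm_succ (e : ℕ → ℝ) (m ℓ : ℕ) :
    esymm e (m+1) (ℓ+1) = esymm e m (ℓ+1) + e m * esymm e m ℓ := by
  classical
  have hnm : m ∉ Finset.range m := by simp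
  rw [esymm, Finset.range_add_one, Finset.powersetCard_succ_insert hnm, Finset.sum_union]
  · congr 1
    rw [Finset.sum_image, esymm, Finset.mul_sum]
    · apply Finset.sum_congr rfl
      intro T hT
      rw [Finset.prod_insert]
      intro hmT
      exact hnm ((Finset.mem_powersetCard.mp hT).1 hmT)
    · intro T hT U hU hTU
      have hT' := (Finset.mem_powersetCard.mp hT).1
      have hU' := (Finset.mem_powersetCard.mp hU).1
      ext x
      constructor <;> intro hx
      · have : x ∈ insert m U := hTU ▸ Finset.mem_insert_of_mem hx
        rcases Finset.mem_insert.mp this with rfl | h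
        · exact absurd (hT' hx) hnm
        · exact h
      · have : x ∈ insert m T := hTU ▸ Finset.mem_insert_of_mem hx
        rcases Finset.mem_insert.mp this with rfl | h
        · exact absurd (hU' hx) hnm
        · exact h
  · rw [Finset.disjoint_right]
    intro T hT
    obtain ⟨U, hU, rfl⟩ := Finset.mem_image.mp hT
    intro hT'
    exact hnm ((Finset.mem_powersetCard.mp hT').1 (Finset.mem_insert_self m U))

noncomputable def T' (a e : ℕ → ℝ) (m k s : ℕ) : ℝ :=
  ∑ ℓ ∈ Finset.range (s + 1), (-1 : ℝ) ^ ℓ * hsymm a (k + 1) (s - ℓ) * esymm e m ℓ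

lemma T'_diag (a e : ℕ → ℝ) (m k : ℕ) : T' a e m k 0 = 1 := by
  simp [T', hsymm_d0, esymm_l0]

lemma sigma_split (e : ℕ → ℝ) (m N : ℕ) (G : ℕ → ℝ) :
    ∑ ℓ ∈ range (N+1), G ℓ * esymm e (m+1) ℓ
      = (∑ ℓ ∈ range (N+1), G ℓ * esymm e m ℓ)
        + e m * ∑ ℓ ∈ range N, G (ℓ+1) * esymm e m ℓ := by
  rw [Finset.sum_range_succ' (fun ℓ => G ℓ * esymm e (m+1) ℓ) N,
      Finset.sum_range_succ' (fun ℓ => G ℓ * esymm e m ℓ) N]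
  have h1 : ∀ ℓ ∈ range N, G (ℓ+1) * esymm e (m+1) (ℓ+1)
      = G (ℓ+1) * esymm e m (ℓ+1) + e m * (G (ℓ+1) * esymm e m ℓ) := by
    intro ℓ _; rw [esymm_succ]; ring
  rw [Finset.sum_congr rfl h1, Finset.sum_add_distrib, ← Finset.mul_sum,
      esymm_l0, esymm_l0]
  ring

lemma hA_lem (a e : ℕ → ℝ) (m k n : ℕ) :
    (∑ ℓ ∈ range (n+1+1), (-1:ℝ)^ℓ * hsymm a (k+1+1) (n+1-ℓ) * esymm e m ℓ)
      = T' a e m k (n+1) + a (k+1) * T' a e m (k+1) n := by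
  rw [Finset.sum_range_succ]
  have h1 : ∀ ℓ ∈ range (n+1), (-1:ℝ)^ℓ * hsymm a (k+1+1) (n+1-ℓ) * esymm e m ℓ
      = (-1:ℝ)^ℓ * hsymm a (k+1) (n+1-ℓ) * esymm e m ℓ
        + a (k+1) * ((-1:ℝ)^ℓ * hsymm a (k+1+1) (n-ℓ) * esymm e m ℓ) := by
    intro ℓ hℓ
    have hle : ℓ ≤ n := Nat.lt_succ_iff.mp (Finset.mem_range.mp hℓ)
    rw [show n+1-ℓ = (n-ℓ)+1 by omega, hsymm_succ]
    ring
  rw [Finset.sum_congr rfl h1, Finset.sum_add_distrib, ← Finset.mul_sum, T', T']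
  conv_rhs => rw [Finset.sum_range_succ]
  simp only [Nat.sub_self, hsymm_d0]
  ring

lemma T'_rec (a e : ℕ → ℝ) (m k n : ℕ) :
    T' a e (m+1) (k+1) (n+1) = T' a e m k (n+1) + (a (k+1) - e m) * T' a e m (k+1) n := by
  rw [T']
  have hs : ∑ ℓ ∈ range (n+1+1), (-1:ℝ)^ℓ * hsymm a (k+1+1) (n+1-ℓ) * esymm e (m+1) ℓ
      = (∑ ℓ ∈ range (n+1+1), (-1:ℝ)^ℓ * hsymm a (k+1+1) (n+1-ℓ) * esymm e m ℓ)
        + e m * ∑ ℓ ∈ range (n+1), (-1:ℝ)^(ℓ+1) * hsymm a (k+1+1) (n+1-(ℓ+1)) * esymm e m ℓ :=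
    sigma_split e m (n+1) _
  have hC : ∑ ℓ ∈ range (n+1), (-1:ℝ)^(ℓ+1) * hsymm a (k+1+1) (n+1-(ℓ+1)) * esymm e m ℓ
      = - T' a e m (k+1) n := by
    rw [T', ← Finset.sum_neg_distrib]
    refine Finset.sum_congr rfl fun ℓ _ => ?_
    rw [show n+1-(ℓ+1) = n - ℓ by omega]
    ring
  rw [hs, hC, hA_lem]
  ring

lemma T'_zero (a e : ℕ → ℝ) (m : ℕ) :
    T' a e (m+1) 0 (m+1) = (a 0 - e m) * T' a e m 0 m := by
  have hA0 : (∑ ℓ ∈ range (m+1+1), (-1:ℝ)^ℓ * hsymm a (0+1) (m+1-ℓ) * esymm e m ℓ)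
      = a 0 * T' a e m 0 m := by
    rw [Finset.sum_range_succ]
    have h1 : ∀ ℓ ∈ range (m+1), (-1:ℝ)^ℓ * hsymm a (0+1) (m+1-ℓ) * esymm e m ℓ
        = a 0 * ((-1:ℝ)^ℓ * hsymm a (0+1) (m-ℓ) * esymm e m ℓ) := by
      intro ℓ hℓ
      have hle : ℓ ≤ m := Nat.lt_succ_iff.mp (Finset.mem_range.mp hℓ)
      rw [show m+1-ℓ = (m-ℓ)+1 by omega, hsymm_succ, hsymm_t0]
      ring
    rw [Finset.sum_congr rfl h1, ← Finset.mul_sum,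
        esymm_zero_of_lt e (Nat.lt_succ_self m), T']
    ring
  rw [T']
  have hs : ∑ ℓ ∈ range (m+1+1), (-1:ℝ)^ℓ * hsymm a (0+1) (m+1-ℓ) * esymm e (m+1) ℓ
      = (∑ ℓ ∈ range (m+1+1), (-1:ℝ)^ℓ * hsymm a (0+1) (m+1-ℓ) * esymm e m ℓ)
        + e m * ∑ ℓ ∈ range (m+1), (-1:ℝ)^(ℓ+1) * hsymm a (0+1) (m+1-(ℓ+1)) * esymm e m ℓ :=
    sigma_split e m (m+1) _
  have hC : ∑ ℓ ∈ range (m+1), (-1:ℝ)^(ℓ+1) * hsymm a (0+1) (m+1-(ℓ+1)) * esymm e m ℓ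
      = - T' a e m 0 m := by
    rw [T', ← Finset.sum_neg_distrib]
    refine Finset.sum_congr rfl fun ℓ _ => ?_
    rw [show m+1-(ℓ+1) = m - ℓ by omega]
    ring
  rw [hs, hC, hA0]
  ring

lemma T_poly (a e : ℕ → ℝ) (m : ℕ) :
    ∏ i ∈ Finset.range m, (X - C (e i)) =
      ∑ k ∈ Finset.range (m+1), C (T' a e m k (m - k)) * ∏ i ∈ Finset.range k, (X - C (a i)) := by
  induction m with
  | zero => simp [T'_diag]
  | succ m ih =>
    rw [Finset.prod_range_succ, ih, Finset.sum_mul]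
    have step : ∀ k ∈ range (m+1),
        (C (T' a e m k (m-k)) * ∏ i ∈ range k, (X - C (a i))) * (X - C (e m))
        = C (T' a e m k (m-k)) * ∏ i ∈ range (k+1), (X - C (a i))
          + C ((a k - e m) * T' a e m k (m-k)) * ∏ i ∈ range k, (X - C (a i)) := by
      intro k _
      rw [Finset.prod_range_succ, map_mul, map_sub]
      ring
    rw [Finset.sum_congr rfl step, Finset.sum_add_distrib]
    have L1 : ∑ k ∈ range (m+1), C (T' a e m k (m-k)) * ∏ i ∈ range (k+1), (X - C (a i))
        = (∑ k ∈ range m, C (T' a e m k (m-k)) * ∏ i ∈ range (k+1), (X - C (a i)))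
          + C (T' a e m m (m-m)) * ∏ i ∈ range (m+1), (X - C (a i)) :=
      Finset.sum_range_succ _ m
    have L2 : ∑ k ∈ range (m+1), C ((a k - e m) * T' a e m k (m-k)) * ∏ i ∈ range k, (X - C (a i))
        = (∑ j ∈ range m, C ((a (j+1) - e m) * T' a e m (j+1) (m-(j+1)))
            * ∏ i ∈ range (j+1), (X - C (a i)))
          + C ((a 0 - e m) * T' a e m 0 (m-0)) * ∏ i ∈ range 0, (X - C (a i)) :=
      Finset.sum_range_succ' _ m
    have R1 : ∑ k ∈ range (m+1+1), C (T' a e (m+1) k (m+1-k)) * ∏ i ∈ range k, (X - C (a i))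
        = (∑ j ∈ range (m+1), C (T' a e (m+1) (j+1) (m+1-(j+1)))
            * ∏ i ∈ range (j+1), (X - C (a i)))
          + C (T' a e (m+1) 0 (m+1-0)) * ∏ i ∈ range 0, (X - C (a i)) :=
      Finset.sum_range_succ' _ (m+1)
    have R2 : ∑ j ∈ range (m+1), C (T' a e (m+1) (j+1) (m+1-(j+1)))
            * ∏ i ∈ range (j+1), (X - C (a i))
        = (∑ j ∈ range m, C (T' a e (m+1) (j+1) (m+1-(j+1)))
            * ∏ i ∈ range (j+1), (X - C (a i)))
          + C (T' a e (m+1) (m+1) (m+1-(m+1))) * ∏ i ∈ range (m+1), (X - C (a i)) :=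
      Finset.sum_range_succ _ m
    have hrec : ∀ j ∈ range m,
        C (T' a e (m+1) (j+1) (m+1-(j+1))) * ∏ i ∈ range (j+1), (X - C (a i))
        = C (T' a e m j (m-j)) * ∏ i ∈ range (j+1), (X - C (a i))
          + C ((a (j+1) - e m) * T' a e m (j+1) (m-(j+1)))
            * ∏ i ∈ range (j+1), (X - C (a i)) := by
      intro j hj
      have hjm : j < m := Finset.mem_range.mp hj
      obtain ⟨n, rfl⟩ : ∃ n, m = j+1+n := ⟨m - (j+1), by omega⟩
      rw [show j+1+n+1-(j+1) = n+1 by omega, show j+1+n-j = n+1 by omega,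
          show j+1+n-(j+1) = n by omega, T'_rec, map_add, map_mul, map_sub, add_mul]
    rw [L1, L2, R1, R2, Finset.sum_congr rfl hrec, Finset.sum_add_distrib]
    rw [show m+1-(m+1) = 0 by omega, Nat.sub_self, T'_diag, T'_diag,
        Nat.sub_zero, Nat.sub_zero, T'_zero]
    ring

lemma uniq (a : ℕ → ℝ) : ∀ (n : ℕ) (c : ℕ → ℝ),
    (∑ k ∈ range n, C (c k) * ∏ i ∈ range k, (X - C (a i)) = 0) → ∀ k < n, c k = 0 := by
  intro n
  induction n with
  | zero => intro c _ k hk; omega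
  | succ n ih =>
    intro c hc
    have hdeg : ∀ k, (∏ i ∈ range k, (X - C (a i) : ℝ[X])).natDegree = k := by
      intro k
      rw [natDegree_prod_of_monic _ _ fun i _ => monic_X_sub_C _]
      simp [natDegree_X_sub_C]
    have hcn : c n = 0 := by
      have h := congrArg (fun p : ℝ[X] => p.coeff n) hc
      simp only [finset_sum_coeff, coeff_C_mul, coeff_zero] at h
      rw [Finset.sum_range_succ] at h
      have hz : ∀ k ∈ range n, c k * (∏ i ∈ range k, (X - C (a i) : ℝ[X])).coeff n = 0 := by
        intro k hk
        rw [coeff_eq_zero_of_natDegree_lt (by rw [hdeg]; exact Finset.mem_range.mp hk), mul_zero]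
      rw [Finset.sum_eq_zero hz, zero_add] at h
      have hmon : (∏ i ∈ range n, (X - C (a i) : ℝ[X])).Monic :=
        monic_prod_of_monic _ _ fun i _ => monic_X_sub_C _
      have : (∏ i ∈ range n, (X - C (a i) : ℝ[X])).coeff n = 1 := by
        have := hmon.coeff_natDegree
        rwa [hdeg] at this
      rwa [this, mul_one] at h
    intro k hk
    rcases Nat.lt_succ_iff_lt_or_eq.mp hk with h | rfl
    · refine ih c ?_ k h
      rw [Finset.sum_range_succ, hcn] at hc
      simpa using hc
    · exact hcn


/-- `S^{a,e}(m,k) = ∑_{ℓ=0}^{m-k} (-1)^ℓ h_{m-k-ℓ}(a_1, …, a_{k+1}) σ_ℓ(e_1, …, e_m)`. -/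
theorem stmt10 (a e : ℕ → ℝ) (S : ℕ → ℕ → ℝ) (hS : SaeRel a e S)
    (m k : ℕ) (hkm : k ≤ m) :
    S m k = ∑ ℓ ∈ Finset.range (m - k + 1),
      (-1 : ℝ) ^ ℓ * hsymm a (k + 1) (m - k - ℓ) * esymm e m ℓ := by
  have h1 := hS.2 m
  have h2 := T_poly a e m
  have hz : ∑ j ∈ range (m+1), C (S m j - T' a e m j (m - j))
      * ∏ i ∈ range j, (X - C (a i)) = 0 := by
    have : ∀ j ∈ range (m+1), C (S m j - T' a e m j (m - j)) * ∏ i ∈ range j, (X - C (a i))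
        = C (S m j) * ∏ i ∈ range j, (X - C (a i))
          - C (T' a e m j (m - j)) * ∏ i ∈ range j, (X - C (a i)) := by
      intro j _; rw [map_sub]; ring
    rw [Finset.sum_congr rfl this, Finset.sum_sub_distrib, ← h1, ← h2, sub_self]
  have := uniq a (m+1) _ hz k (by omega)
  have hST : S m k = T' a e m k (m - k) := by linarith [this]
  rw [hST, T']
end
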